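/- arXiv:1103.4306 — 3 statements merged into one kernel-verified Lean document; each statement's English description precedes it below -/
import Mathlib

section
/- Let α > 2 be an even integer. Then, as θ → 0⁺, ∫_{-∞}^{∞} x^{α-1} e^{iθx}/(1 + |x|^{1+α}) dx ∼ −2iθ log θ; that is, the ratio of the integral on the left to −2iθ log θ converges to 1 as θ → 0⁺. -/
open MeasureTheory Filter

noncomputable def paretoJ (α : ℕ) (θ : ℝ) : ℝ :=
  ∫ u in Set.Ioi (0:ℝ), u ^ (α - 1) * Real.sin u / (θ ^ (1 + α) + u ^ (1 + α))

lemma pareto_den_pos (α : ℕ) (x : ℝ) : (0:ℝ) < 1 + |x| ^ (1 + α) := by positivity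

lemma pareto_kernel_le (α : ℕ) (hα : 2 < α) (x : ℝ) :
    |x| ^ (α - 1) / (1 + |x| ^ (1 + α)) ≤ 2 * (1 + x ^ 2)⁻¹ := by
  have h1 : |x| ^ (α - 1) ≤ 1 + |x| ^ (1 + α) := by
    rcases le_total |x| 1 with h | h
    · calc |x| ^ (α - 1) ≤ 1 := pow_le_one₀ (abs_nonneg x) h
        _ ≤ 1 + |x| ^ (1 + α) := by nlinarith [pow_nonneg (abs_nonneg x) (1 + α)]
    · calc |x| ^ (α - 1) ≤ |x| ^ (1 + α) := pow_le_pow_right₀ h (by omega)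
        _ ≤ 1 + |x| ^ (1 + α) := by linarith
  have h2 : |x| ^ (α - 1) * x ^ 2 ≤ 1 + |x| ^ (1 + α) := by
    have : |x| ^ (α - 1) * x ^ 2 = |x| ^ (1 + α) := by
      rw [← sq_abs, ← pow_add]
      congr 1
      omega
    rw [this]; linarith [pow_nonneg (abs_nonneg x) (1 + α)]
  have hx2 : (0:ℝ) < 1 + x ^ 2 := by positivity
  rw [show (2:ℝ) * (1 + x ^ 2)⁻¹ = 2 / (1 + x ^ 2) by rw [div_eq_mul_inv],
    div_le_div_iff₀ (pareto_den_pos α x) hx2]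
  nlinarith [h1, h2]

lemma pareto_integrable (α : ℕ) (hα : 2 < α) {c : ℝ → ℝ} (hc : Continuous c)
    (hb : ∀ x, |c x| ≤ 1) :
    Integrable fun x : ℝ => x ^ (α - 1) * c x / (1 + |x| ^ (1 + α)) := by
  have hmaj : Integrable fun x : ℝ => 2 * (1 + x ^ 2)⁻¹ :=
    integrable_inv_one_add_sq.const_mul 2
  refine hmaj.mono' ?_ ?_
  · apply Continuous.aestronglyMeasurable
    exact (((continuous_pow _).mul hc).div
      (by continuity) (fun x => (pareto_den_pos α x).ne'))
  · refine Filter.Eventually.of_forall fun x => ?_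
    have hden := pareto_den_pos α x
    rw [Real.norm_eq_abs, abs_div, abs_of_pos hden, abs_mul, abs_pow]
    calc |x| ^ (α - 1) * |c x| / (1 + |x| ^ (1 + α))
        ≤ |x| ^ (α - 1) * 1 / (1 + |x| ^ (1 + α)) := by
          gcongr
          exact hb x
      _ = |x| ^ (α - 1) / (1 + |x| ^ (1 + α)) := by rw [mul_one]
      _ ≤ 2 * (1 + x ^ 2)⁻¹ := pareto_kernel_le α hα x

lemma pareto_split (g : ℝ → ℝ) (hg : Integrable g) :
    ∫ x, g x = (∫ x in Set.Ioi (0:ℝ), g (-x)) + ∫ x in Set.Ioi (0:ℝ), g x := by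
  have h := intervalIntegral.integral_Iic_add_Ioi (μ := volume) (f := g) (b := (0:ℝ))
      hg.integrableOn hg.integrableOn
  have h2 : (∫ x in Set.Ioi (0:ℝ), g (-x)) = ∫ x in Set.Iic (0:ℝ), g x := by
    simpa using integral_comp_neg_Ioi 0 g
  rw [h2, h]

lemma pareto_cos_zero (α : ℕ) (hα : 2 < α) (heven : Even α) (θ : ℝ) :
    ∫ x : ℝ, x ^ (α - 1) * Real.cos (θ * x) / (1 + |x| ^ (1 + α)) = 0 := by
  have hodd : Odd (α - 1) := Nat.Even.sub_odd (by omega) heven odd_one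
  have hint : Integrable fun x : ℝ => x ^ (α - 1) * Real.cos (θ * x) / (1 + |x| ^ (1 + α)) :=
    pareto_integrable α hα (by fun_prop) (fun x => Real.abs_cos_le_one _)
  rw [pareto_split _ hint]
  have : (∫ x in Set.Ioi (0:ℝ),
      (-x) ^ (α - 1) * Real.cos (θ * (-x)) / (1 + |(-x)| ^ (1 + α)))
      = ∫ x in Set.Ioi (0:ℝ), -(x ^ (α - 1) * Real.cos (θ * x) / (1 + |x| ^ (1 + α))) := by
    apply setIntegral_congr_fun measurableSet_Ioi
    intro x _
    simp only [hodd.neg_pow, mul_neg, Real.cos_neg, abs_neg, neg_mul, neg_div]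
  rw [this, integral_neg]
  ring

lemma pareto_sin_eq (α : ℕ) (hα : 2 < α) (heven : Even α) (θ : ℝ) :
    ∫ x : ℝ, x ^ (α - 1) * Real.sin (θ * x) / (1 + |x| ^ (1 + α)) =
      2 * ∫ x in Set.Ioi (0:ℝ), x ^ (α - 1) * Real.sin (θ * x) / (1 + x ^ (1 + α)) := by
  have hodd : Odd (α - 1) := Nat.Even.sub_odd (by omega) heven odd_one
  have hint : Integrable fun x : ℝ => x ^ (α - 1) * Real.sin (θ * x) / (1 + |x| ^ (1 + α)) :=
    pareto_integrable α hα (by fun_prop) (fun x => Real.abs_sin_le_one _)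
  rw [pareto_split _ hint]
  have h1 : (∫ x in Set.Ioi (0:ℝ),
      (-x) ^ (α - 1) * Real.sin (θ * (-x)) / (1 + |(-x)| ^ (1 + α)))
      = ∫ x in Set.Ioi (0:ℝ), x ^ (α - 1) * Real.sin (θ * x) / (1 + |x| ^ (1 + α)) := by
    apply setIntegral_congr_fun measurableSet_Ioi
    intro x _
    simp only [hodd.neg_pow, mul_neg, Real.sin_neg, abs_neg, neg_mul_neg, neg_mul, neg_neg]
  have h2 : (∫ x in Set.Ioi (0:ℝ), x ^ (α - 1) * Real.sin (θ * x) / (1 + |x| ^ (1 + α)))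
      = ∫ x in Set.Ioi (0:ℝ), x ^ (α - 1) * Real.sin (θ * x) / (1 + x ^ (1 + α)) := by
    apply setIntegral_congr_fun measurableSet_Ioi
    intro x hx
    simp only [abs_of_pos (show (0:ℝ) < x from hx)]
  rw [h1, h2]
  ring

lemma pareto_subst (α : ℕ) (hα : 2 < α) {θ : ℝ} (hθ : 0 < θ) :
    ∫ x in Set.Ioi (0:ℝ), x ^ (α - 1) * Real.sin (θ * x) / (1 + x ^ (1 + α)) =
      θ * paretoJ α θ := by
  have key := integral_comp_mul_left_Ioi
      (fun u => θ ^ 2 * (u ^ (α - 1) * Real.sin u / (θ ^ (1 + α) + u ^ (1 + α)))) 0 hθ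
  simp only [mul_zero] at key
  have hpow : θ ^ 2 * θ ^ (α - 1) = θ ^ (1 + α) := by
    rw [← pow_add]; congr 1; omega
  have hpt : ∀ x ∈ Set.Ioi (0:ℝ),
      x ^ (α - 1) * Real.sin (θ * x) / (1 + x ^ (1 + α))
        = θ ^ 2 * ((θ * x) ^ (α - 1) * Real.sin (θ * x) / (θ ^ (1 + α) + (θ * x) ^ (1 + α))) := by
    intro x hx
    have hx0 : (0:ℝ) < x := hx
    have hd1 : (0:ℝ) < 1 + x ^ (1 + α) := by positivity
    have hd2 : (0:ℝ) ≠ θ ^ (1 + α) := by positivity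
    rw [mul_pow, mul_pow,
      show θ ^ (1 + α) + θ ^ (1 + α) * x ^ (1 + α) = θ ^ (1 + α) * (1 + x ^ (1 + α)) by ring,
      show θ ^ 2 * (θ ^ (α - 1) * x ^ (α - 1) * Real.sin (θ * x) /
          (θ ^ (1 + α) * (1 + x ^ (1 + α))))
        = θ ^ 2 * θ ^ (α - 1) * (x ^ (α - 1) * Real.sin (θ * x)) /
          (θ ^ (1 + α) * (1 + x ^ (1 + α))) by ring,
      hpow, mul_div_mul_left _ _ hd2.symm]
  rw [setIntegral_congr_fun measurableSet_Ioi hpt, key, MeasureTheory.integral_const_mul, smul_eq_mul,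
    paretoJ]
  field_simp


lemma paretoJ_bound_aux (α : ℕ) (hα : 2 < α) {θ : ℝ} (hθ : 0 < θ) (hθ1 : θ < 1) :
    |(∫ u in Set.Ioi (0:ℝ), u ^ (α - 1) * Real.sin u / (θ ^ (1 + α) + u ^ (1 + α)))
      + Real.log θ| ≤ 3 := by
  set c := θ ^ (1 + α) with hc
  have hc0 : 0 < c := by positivity
  have hc1 : c ≤ 1 := pow_le_one₀ hθ.le hθ1.le
  set φ := fun u : ℝ => u ^ (α - 1) * Real.sin u / (c + u ^ (1 + α)) with hφ
  set ψ := fun u : ℝ => u ^ α / (c + u ^ (1 + α)) with hψ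
  set η := fun u : ℝ => u ^ (α - 1) * (Real.sin u - u) / (c + u ^ (1 + α)) with hη
  have hden : ∀ u : ℝ, 0 ≤ u → 0 < c + u ^ (1 + α) := fun u hu => by positivity
  -- integrability on Ioc 0 1
  have hmeasφ : ∀ s : Set ℝ, s ⊆ Set.Ici 0 → MeasurableSet s → IntegrableOn φ s → True :=
    fun _ _ _ _ => trivial
  have hcont : ∀ f : ℝ → ℝ, Continuous f →
      ContinuousOn (fun u => f u / (c + u ^ (1 + α))) (Set.Ici (0:ℝ)) := by
    intro f hf
    exact ContinuousOn.div hf.continuousOn (by fun_prop) (fun u hu => (hden u hu).ne')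
  have hintφ1 : IntegrableOn φ (Set.Ioc (0:ℝ) 1) :=
    (((hcont _ (by fun_prop)).mono (Set.Icc_subset_Ici_self)).integrableOn_Icc).mono_set
      Set.Ioc_subset_Icc_self
  have hintψ : IntegrableOn ψ (Set.Ioc (0:ℝ) 1) :=
    (((hcont _ (by fun_prop)).mono (Set.Icc_subset_Ici_self)).integrableOn_Icc).mono_set
      Set.Ioc_subset_Icc_self
  have hintη : IntegrableOn η (Set.Ioc (0:ℝ) 1) :=
    (((hcont _ (by fun_prop)).mono (Set.Icc_subset_Ici_self)).integrableOn_Icc).mono_set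
      Set.Ioc_subset_Icc_self
  -- integrability on Ioi 1
  have hmaj2 : IntegrableOn (fun u : ℝ => (u ^ 2)⁻¹) (Set.Ioi (1:ℝ)) := by
    have h := integrableOn_Ioi_rpow_of_lt (show (-2:ℝ) < -1 by norm_num) one_pos
    apply h.congr_fun ?_ measurableSet_Ioi
    intro u hu
    have hu0 : (0:ℝ) ≤ u := by
      have : (1:ℝ) < u := hu
      linarith
    show u ^ (-2:ℝ) = (u ^ 2)⁻¹
    rw [show (-2:ℝ) = -((2:ℕ):ℝ) by norm_num, Real.rpow_neg hu0, Real.rpow_natCast]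
  have hb2 : ∀ u ∈ Set.Ioi (1:ℝ), ‖φ u‖ ≤ (u ^ 2)⁻¹ := by
    intro u hu
    have hu1 : (1:ℝ) < u := hu
    have hu0 : (0:ℝ) < u := by linarith
    have hd : (0:ℝ) < c + u ^ (1 + α) := hden u hu0.le
    have hup : (0:ℝ) < u ^ (1 + α) := by positivity
    rw [Real.norm_eq_abs, hφ]
    simp only [abs_div, abs_of_pos hd, abs_mul, abs_pow, abs_of_pos hu0]
    have key : u ^ (α - 1) / u ^ (1 + α) = (u ^ 2)⁻¹ := by
      rw [show (1 + α) = (α - 1) + 2 by omega, pow_add, ← div_div]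
      rw [div_self (by positivity : u ^ (α - 1) ≠ 0), one_div]
    have hnum : u ^ (α - 1) * |Real.sin u| ≤ u ^ (α - 1) :=
      mul_le_of_le_one_right (by positivity) (Real.abs_sin_le_one u)
    calc u ^ (α - 1) * |Real.sin u| / (c + u ^ (1 + α))
        ≤ u ^ (α - 1) / u ^ (1 + α) :=
          div_le_div₀ (by positivity) hnum hup (by linarith)
      _ = (u ^ 2)⁻¹ := key
  have hintφ2 : IntegrableOn φ (Set.Ioi (1:ℝ)) := by
    refine hmaj2.mono' ?_ ?_
    · exact ((hcont _ (by fun_prop)).mono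
        (fun u (hu : u ∈ Set.Ioi (1:ℝ)) => le_of_lt (show (0:ℝ) < u by linarith [Set.mem_Ioi.mp hu]))
        ).aestronglyMeasurable measurableSet_Ioi
    · exact (ae_restrict_iff' measurableSet_Ioi).mpr (Filter.Eventually.of_forall hb2)
  -- bound on Ioi 1
  have hB : |∫ u in Set.Ioi (1:ℝ), φ u| ≤ 1 := by
    have h1 : |∫ u in Set.Ioi (1:ℝ), φ u| ≤ ∫ u in Set.Ioi (1:ℝ), |φ u| := by
      simpa [Real.norm_eq_abs] using
        norm_integral_le_integral_norm (μ := volume.restrict (Set.Ioi (1:ℝ))) φ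
    have h2 : (∫ u in Set.Ioi (1:ℝ), |φ u|) ≤ ∫ u in Set.Ioi (1:ℝ), (u ^ 2)⁻¹ := by
      apply setIntegral_mono_on hintφ2.abs hmaj2 measurableSet_Ioi
      intro u hu
      simpa [Real.norm_eq_abs] using hb2 u hu
    have h3 : (∫ u in Set.Ioi (1:ℝ), (u ^ 2)⁻¹) = 1 := by
      have he : (∫ u in Set.Ioi (1:ℝ), (u ^ 2)⁻¹) = ∫ u in Set.Ioi (1:ℝ), u ^ (-2:ℝ) := by
        apply setIntegral_congr_fun measurableSet_Ioi
        intro u hu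
        have hu0 : (0:ℝ) ≤ u := by
          have : (1:ℝ) < u := hu
          linarith
        show (u ^ 2)⁻¹ = u ^ (-2:ℝ)
        rw [show (-2:ℝ) = -((2:ℕ):ℝ) by norm_num, Real.rpow_neg hu0, Real.rpow_natCast]
      rw [he, integral_Ioi_rpow_of_lt (by norm_num) one_pos]
      norm_num
    linarith
  -- bound for η on Ioc 0 1
  have hbη : ∀ u ∈ Set.Ioc (0:ℝ) 1, ‖η u‖ ≤ 1 := by
    intro u hu
    obtain ⟨hu0, hu1⟩ := hu
    have hd : (0:ℝ) < c + u ^ (1 + α) := hden u hu0.le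
    have hup : (0:ℝ) < u ^ (1 + α) := by positivity
    have hsin : |Real.sin u - u| ≤ u ^ 3 := by
      have hle : Real.sin u ≤ u := (Real.sin_lt hu0).le
      have hge : u - u ^ 3 / 4 < Real.sin u := by
        have := Real.sin_gt_sub_cube hu0; linarith [pow_pos hu0 3]
      rw [abs_of_nonpos (by linarith)]
      nlinarith [pow_pos hu0 3]
    rw [Real.norm_eq_abs, hη]
    rw [abs_div, abs_of_pos hd, abs_mul, abs_pow, abs_of_pos hu0]
    have key : u ^ (α - 1) * u ^ 3 / u ^ (1 + α) = u := by
      rw [← pow_add, show (α - 1) + 3 = (1 + α) + 1 by omega, pow_add, mul_comm,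
        mul_div_assoc, div_self (by positivity : u ^ (1 + α) ≠ 0), mul_one, pow_one]
    have hnum : u ^ (α - 1) * |Real.sin u - u| ≤ u ^ (α - 1) * u ^ 3 :=
      mul_le_mul_of_nonneg_left hsin (by positivity)
    calc u ^ (α - 1) * |Real.sin u - u| / (c + u ^ (1 + α))
        ≤ u ^ (α - 1) * u ^ 3 / u ^ (1 + α) :=
          div_le_div₀ (by positivity) hnum hup (by linarith)
      _ = u := key
      _ ≤ 1 := hu1
  have hE1 : |∫ u in Set.Ioc (0:ℝ) 1, η u| ≤ 1 := by
    have := norm_setIntegral_le_of_norm_le_const (μ := volume) (s := Set.Ioc (0:ℝ) 1)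
      (C := 1) (by simp [Real.volume_Ioc]) hbη
    simpa [Real.volume_real_Ioc] using this
  -- pointwise splitting
  have hφψη : ∀ u ∈ Set.Ioc (0:ℝ) 1, φ u = ψ u + η u := by
    intro u _
    have hpow : u ^ (α - 1) * u = u ^ α := by
      rw [← pow_succ]; congr 1; omega
    have hnum : u ^ α + u ^ (α - 1) * (Real.sin u - u) = u ^ (α - 1) * Real.sin u := by
      rw [← hpow]; ring
    simp only [hφ, hψ, hη]
    rw [← add_div, hnum]
  have hA : (∫ u in Set.Ioc (0:ℝ) 1, φ u)
      = (∫ u in Set.Ioc (0:ℝ) 1, ψ u) + ∫ u in Set.Ioc (0:ℝ) 1, η u := by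
    rw [← integral_add hintψ hintη]
    exact setIntegral_congr_fun measurableSet_Ioc hφψη
  -- value of K
  have hK : (∫ u in Set.Ioc (0:ℝ) 1, ψ u)
      = Real.log (c + 1) / (1 + α : ℝ) - Real.log θ := by
    have h0 : (∫ u in Set.Ioc (0:ℝ) 1, ψ u) = ∫ u in (0:ℝ)..1, ψ u :=
      (intervalIntegral.integral_of_le zero_le_one).symm
    have hderiv : ∀ u ∈ Set.uIcc (0:ℝ) 1,
        HasDerivAt (fun v => Real.log (c + v ^ (1 + α)) / (1 + α : ℝ)) (ψ u) u := by
      intro u hu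
      rw [Set.uIcc_of_le zero_le_one] at hu
      have hdu : (0:ℝ) < c + u ^ (1 + α) := hden u hu.1
      have h1 : HasDerivAt (fun v : ℝ => c + v ^ (1 + α))
          (((1 + α : ℕ) : ℝ) * u ^ (1 + α - 1)) u :=
        (hasDerivAt_pow (1 + α) u).const_add c
      have h2 := (h1.log hdu.ne').div_const ((1 + α : ℕ) : ℝ)
      have h3 : (((1 + α : ℕ) : ℝ) * u ^ (1 + α - 1) / (c + u ^ (1 + α)) / ((1 + α : ℕ) : ℝ))
          = ψ u := by
        have hne : ((1 + α : ℕ) : ℝ) ≠ 0 := by positivity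
        rw [show (1 + α) - 1 = α by omega]
        simp only [hψ]
        field_simp
      rw [h3] at h2
      rw [show ((1 + α : ℕ) : ℝ) = (1 + α : ℝ) by push_cast; ring] at h2
      exact h2
    have hci : IntervalIntegrable ψ volume 0 1 := by
      apply ContinuousOn.intervalIntegrable
      rw [Set.uIcc_of_le zero_le_one]
      exact ContinuousOn.div (by fun_prop) (by fun_prop) (fun u hu => (hden u hu.1).ne')
    rw [h0, intervalIntegral.integral_eq_sub_of_hasDerivAt hderiv hci]
    rw [one_pow, zero_pow (by omega : 1 + α ≠ 0), add_zero, hc, Real.log_pow]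
    push_cast
    have hne : (1 + (α:ℝ)) ≠ 0 := by positivity
    field_simp
  -- bound for the log term
  have hlogterm : |Real.log (c + 1) / (1 + α : ℝ)| ≤ 1 := by
    have h1 : (0:ℝ) ≤ Real.log (c + 1) := Real.log_nonneg (by linarith)
    have h2 : Real.log (c + 1) ≤ 1 := by
      have := Real.log_le_sub_one_of_pos (show (0:ℝ) < c + 1 by linarith)
      linarith
    have h3 : (1:ℝ) ≤ 1 + α := by
      have : (0:ℝ) ≤ α := Nat.cast_nonneg α
      linarith
    rw [abs_of_nonneg (by positivity)]
    rw [div_le_one (by linarith)]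
    linarith
  -- splitting J
  have hJ : (∫ u in Set.Ioi (0:ℝ), u ^ (α - 1) * Real.sin u / (θ ^ (1 + α) + u ^ (1 + α)))
      = (∫ u in Set.Ioc (0:ℝ) 1, φ u) + ∫ u in Set.Ioi (1:ℝ), φ u := by
    rw [← setIntegral_union (Set.Ioc_disjoint_Ioi le_rfl) measurableSet_Ioi hintφ1 hintφ2,
      Set.Ioc_union_Ioi_eq_Ioi zero_le_one]
  rw [hJ, hA, hK]
  have : Real.log (c + 1) / (1 + α : ℝ) - Real.log θ + (∫ u in Set.Ioc (0:ℝ) 1, η u)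
      + (∫ u in Set.Ioi (1:ℝ), φ u) + Real.log θ
      = Real.log (c + 1) / (1 + α : ℝ) + (∫ u in Set.Ioc (0:ℝ) 1, η u)
      + (∫ u in Set.Ioi (1:ℝ), φ u) := by ring
  rw [this]
  calc |Real.log (c + 1) / (1 + α : ℝ) + (∫ u in Set.Ioc (0:ℝ) 1, η u)
      + (∫ u in Set.Ioi (1:ℝ), φ u)|
      ≤ |Real.log (c + 1) / (1 + α : ℝ)| + |∫ u in Set.Ioc (0:ℝ) 1, η u|
        + |∫ u in Set.Ioi (1:ℝ), φ u| := abs_add_three _ _ _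
    _ ≤ 1 + 1 + 1 := by gcongr
    _ = 3 := by norm_num


lemma paretoJ_bound (α : ℕ) (hα : 2 < α) {θ : ℝ} (hθ : 0 < θ) (hθ1 : θ < 1) :
    |paretoJ α θ + Real.log θ| ≤ 3 := by
  simpa [paretoJ] using paretoJ_bound_aux α hα hθ hθ1

lemma pareto_integral_ofReal {f : ℝ → ℝ} (hf : Integrable f) :
    (∫ x, ((f x : ℝ) : ℂ)) = ((∫ x, f x : ℝ) : ℂ) := by
  simpa using Complex.ofRealCLM.integral_comp_comm hf

/-- For an even integer `α > 2`, as `θ → 0⁺`,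
`∫ x, x^(α-1) e^{iθx} / (1 + |x|^(1+α)) dx ∼ -2iθ log θ`. -/
theorem pareto_even_integral_asymptotic (α : ℕ) (hα : 2 < α) (heven : Even α) :
    Tendsto (fun θ : ℝ =>
        (∫ x : ℝ, ((x : ℂ) ^ (α - 1) * Complex.exp (Complex.I * θ * x)) /
            ((1 + |x| ^ (1 + α) : ℝ) : ℂ)) /
          (-2 * Complex.I * (θ : ℂ) * ((Real.log θ : ℝ) : ℂ)))
      (nhdsWithin 0 (Set.Ioi 0)) (nhds 1) := by
  have hev : ∀ᶠ θ in nhdsWithin (0:ℝ) (Set.Ioi 0), θ ∈ Set.Ioo (0:ℝ) 1 :=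
    Ioo_mem_nhdsGT_of_mem ⟨le_rfl, one_pos⟩
  -- Step 1: identify the ratio for θ ∈ (0,1)
  have hmain : ∀ θ : ℝ, θ ∈ Set.Ioo (0:ℝ) 1 →
      (∫ x : ℝ, ((x : ℂ) ^ (α - 1) * Complex.exp (Complex.I * θ * x)) /
            ((1 + |x| ^ (1 + α) : ℝ) : ℂ)) /
          (-2 * Complex.I * (θ : ℂ) * ((Real.log θ : ℝ) : ℂ))
        = ((paretoJ α θ / (-Real.log θ) : ℝ) : ℂ) := by
    intro θ hθ
    obtain ⟨hθ0, hθ1⟩ := hθ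
    have hlog : Real.log θ < 0 := Real.log_neg hθ0 hθ1
    have hdecomp : ∀ x : ℝ,
        ((x : ℂ) ^ (α - 1) * Complex.exp (Complex.I * θ * x)) / ((1 + |x| ^ (1 + α) : ℝ) : ℂ)
          = ((x ^ (α - 1) * Real.cos (θ * x) / (1 + |x| ^ (1 + α)) : ℝ) : ℂ)
            + ((x ^ (α - 1) * Real.sin (θ * x) / (1 + |x| ^ (1 + α)) : ℝ) : ℂ) * Complex.I := by
      intro x
      have hden : ((1 + |x| ^ (1 + α) : ℝ) : ℂ) ≠ 0 := by
        exact_mod_cast (pareto_den_pos α x).ne'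
      rw [show Complex.I * θ * x = ((θ * x : ℝ) : ℂ) * Complex.I by push_cast; ring,
        Complex.exp_mul_I]
      push_cast
      field_simp
    have hcos : Integrable fun x : ℝ => x ^ (α - 1) * Real.cos (θ * x) / (1 + |x| ^ (1 + α)) :=
      pareto_integrable α hα (by fun_prop) (fun x => Real.abs_cos_le_one _)
    have hsin : Integrable fun x : ℝ => x ^ (α - 1) * Real.sin (θ * x) / (1 + |x| ^ (1 + α)) :=
      pareto_integrable α hα (by fun_prop) (fun x => Real.abs_sin_le_one _)
    have hnum : (∫ x : ℝ, ((x : ℂ) ^ (α - 1) * Complex.exp (Complex.I * θ * x)) /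
          ((1 + |x| ^ (1 + α) : ℝ) : ℂ))
        = ((2 * (θ * paretoJ α θ) : ℝ) : ℂ) * Complex.I := by
      have hcosC : Integrable (fun x : ℝ =>
          ((x ^ (α - 1) * Real.cos (θ * x) / (1 + |x| ^ (1 + α)) : ℝ) : ℂ)) := hcos.ofReal
      have hsinC : Integrable (fun x : ℝ =>
          ((x ^ (α - 1) * Real.sin (θ * x) / (1 + |x| ^ (1 + α)) : ℝ) : ℂ)) := hsin.ofReal
      rw [integral_congr_ae (Filter.Eventually.of_forall hdecomp),
        integral_add hcosC (hsinC.mul_const Complex.I),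
        integral_mul_const, pareto_integral_ofReal hcos, pareto_integral_ofReal hsin,
        pareto_cos_zero α hα heven θ, pareto_sin_eq α hα heven θ, pareto_subst α hα hθ0]
      simp
    rw [hnum]
    have h2 : (θ:ℂ) ≠ 0 := by exact_mod_cast hθ0.ne'
    have h3 : ((Real.log θ : ℝ) : ℂ) ≠ 0 := by exact_mod_cast hlog.ne
    have h4 : -Real.log θ ≠ 0 := by linarith
    push_cast
    field_simp
  -- Step 2: the real limit
  have hreal : Tendsto (fun θ : ℝ => paretoJ α θ / (-Real.log θ))
      (nhdsWithin 0 (Set.Ioi 0)) (nhds 1) := by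
    rw [← tendsto_sub_nhds_zero_iff]
    have hlogtop : Tendsto (fun θ : ℝ => -Real.log θ) (nhdsWithin 0 (Set.Ioi 0)) atTop :=
      tendsto_neg_atBot_atTop.comp Real.tendsto_log_nhdsGT_zero
    have hz : Tendsto (fun θ : ℝ => 3 * (-Real.log θ)⁻¹) (nhdsWithin 0 (Set.Ioi 0)) (nhds 0) := by
      simpa using (hlogtop.inv_tendsto_atTop).const_mul (3:ℝ)
    apply squeeze_zero_norm' ?_ hz
    filter_upwards [hev] with θ hθ
    have hlog : Real.log θ < 0 := Real.log_neg hθ.1 hθ.2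
    have hl0 : (0:ℝ) < -Real.log θ := by linarith
    have heq : paretoJ α θ / (-Real.log θ) - 1
        = (paretoJ α θ + Real.log θ) / (-Real.log θ) := by
      rw [div_sub_one hl0.ne']
      ring_nf
    rw [Real.norm_eq_abs, heq, abs_div, abs_of_pos hl0, div_le_iff₀ hl0, mul_assoc,
      inv_mul_cancel₀ hl0.ne', mul_one]
    exact paretoJ_bound α hα hθ.1 hθ.2
  -- assemble
  have hC : Tendsto (fun θ : ℝ => ((paretoJ α θ / (-Real.log θ) : ℝ) : ℂ))
      (nhdsWithin 0 (Set.Ioi 0)) (nhds 1) := by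
    have := (Complex.continuous_ofReal.tendsto 1).comp hreal
    rw [Complex.ofReal_one] at this
    exact this
  apply hC.congr'
  filter_upwards [hev] with θ hθ
  exact (hmain θ hθ).symm
end

section
/- Let α > 2 be a non-integer real number and let q = ⌊α⌋ be even. Then, as θ → 0⁺, ∫_{-∞}^{∞} x^{q}(e^{iθx} − 1)/(1 + |x|^{1+α}) dx ∼ 2 θ^{α−q} Γ(q−α) cos((q−α)π/2), where Γ denotes the Gamma function. -/
open MeasureTheory Filter

namespace ParetoAux

open Set Complex

variable {q : ℕ} {α s : ℝ}

lemma norm_exp_I_mul_sub_one_le (t : ℝ) :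
    ‖Complex.exp (Complex.I * t) - 1‖ ≤ min 2 (2 * |t|) := by
  rcases le_or_gt |t| 1 with h | h
  · refine le_min ?_ ?_
    · calc ‖Complex.exp (Complex.I * t) - 1‖ ≤ ‖Complex.exp (Complex.I * t)‖ + ‖(1 : ℂ)‖ :=
        norm_sub_le _ _
      _ ≤ 2 := by
        rw [mul_comm, Complex.norm_exp_ofReal_mul_I]; norm_num
    · have := Complex.norm_exp_sub_one_le (x := Complex.I * t)
        (by simpa [Complex.norm_exp_ofReal_mul_I, mul_comm] using h)
      simpa [mul_comm, Complex.norm_exp_ofReal_mul_I] using this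
  · rw [min_eq_left (by linarith)]
    calc ‖Complex.exp (Complex.I * t) - 1‖ ≤ ‖Complex.exp (Complex.I * t)‖ + ‖(1 : ℂ)‖ :=
      norm_sub_le _ _
    _ ≤ 2 := by
      rw [mul_comm, Complex.norm_exp_ofReal_mul_I]; norm_num

lemma integrableOn_rpow_mul_exp {b : ℝ} (hb : -1 < b) {c : ℝ} (hc : 0 < c) :
    IntegrableOn (fun t : ℝ => t ^ b * Real.exp (-(c * t))) (Ioi (0 : ℝ)) := by
  have H := Real.GammaIntegral_convergent (s := b + 1) (by linarith)
  simp only [add_sub_cancel_right] at H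
  have H2 : IntegrableOn (fun t : ℝ => Real.exp (-(c * t)) * (c * t) ^ b) (Ioi (0 : ℝ)) := by
    have := (integrableOn_Ioi_comp_mul_left_iff
      (fun x : ℝ => Real.exp (-x) * x ^ b) 0 hc).2 (by simpa using H)
    simpa using this
  have H3 : IntegrableOn (fun t : ℝ => c ^ b * (t ^ b * Real.exp (-(c * t)))) (Ioi (0 : ℝ)) := by
    refine H2.congr_fun (fun t ht => ?_) measurableSet_Ioi
    beta_reduce
    rw [Real.mul_rpow hc.le (le_of_lt ht)]
    ring
  have hcb : (c : ℝ) ^ b ≠ 0 := (Real.rpow_pos_of_pos hc b).ne'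
  have := H3.const_mul ((c : ℝ) ^ b)⁻¹
  simp [← mul_assoc, inv_mul_cancel₀ hcb] at this
  exact this

lemma meas_aux (b : ℝ) (a : ℂ) :
    AEStronglyMeasurable (fun t : ℝ => ((t ^ b : ℝ) : ℂ) * Complex.exp (-(a * t)))
      (volume.restrict (Ioi (0:ℝ))) := by
  apply Measurable.aestronglyMeasurable
  fun_prop

lemma integrable_ofReal_rpow_mul_cexp {b : ℝ} (hb : -1 < b) {a : ℂ} (ha : 0 < a.re) :
    IntegrableOn (fun t : ℝ => ((t ^ b : ℝ) : ℂ) * Complex.exp (-(a * t))) (Ioi (0:ℝ)) := by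
  refine Integrable.mono' (integrableOn_rpow_mul_exp hb ha) (meas_aux b a) ?_
  filter_upwards [ae_restrict_mem measurableSet_Ioi] with t ht
  rw [norm_mul, Complex.norm_exp]
  simp only [neg_re, mul_re, ofReal_re, ofReal_im, mul_zero, sub_zero]
  rw [Complex.norm_real, Real.norm_eq_abs, _root_.abs_of_nonneg (Real.rpow_nonneg (le_of_lt ht) b)]

lemma cexp_gamma_integral {s : ℝ} (hs : 0 < s) {a : ℂ} (ha : 0 < a.re) :
    ∫ t : ℝ in Ioi 0, ((t ^ (s - 1) : ℝ) : ℂ) * Complex.exp (-(a * t))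
      = a ^ (-(s : ℂ)) * Complex.Gamma s := by
  set U : Set ℂ := {z | 0 < z.re} with hU
  have hUo : IsOpen U := isOpen_lt continuous_const Complex.continuous_re
  set f : ℂ → ℂ := fun z => ∫ t : ℝ in Ioi 0, ((t ^ (s - 1) : ℝ) : ℂ) * Complex.exp (-(z * t))
    with hf_def
  set g : ℂ → ℂ := fun z => z ^ (-(s : ℂ)) * Complex.Gamma s with hg_def
  have hs1 : (-1 : ℝ) < s - 1 := by linarith
  -- f is differentiable on U
  have hfd : DifferentiableOn ℂ f U := by
    intro z hz
    have hz' : (0 : ℝ) < z.re := hz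
    have key := hasDerivAt_integral_of_dominated_loc_of_deriv_le
      (μ := volume.restrict (Ioi (0:ℝ)))
      (F := fun (w : ℂ) (t : ℝ) => ((t ^ (s - 1) : ℝ) : ℂ) * Complex.exp (-(w * t)))
      (F' := fun (w : ℂ) (t : ℝ) =>
        ((t ^ (s - 1) : ℝ) : ℂ) * ((-(t : ℂ)) * Complex.exp (-(w * t))))
      (x₀ := z) (bound := fun t : ℝ => t ^ s * Real.exp (-(z.re / 2 * t)))
      (Metric.ball_mem_nhds z (half_pos hz')) ?_ ?_ ?_ ?_ ?_ ?_
    · exact key.2.differentiableAt.differentiableWithinAt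
    · filter_upwards with w; exact meas_aux _ _
    · exact integrable_ofReal_rpow_mul_cexp hs1 hz'
    · apply Measurable.aestronglyMeasurable; fun_prop
    · filter_upwards [ae_restrict_mem measurableSet_Ioi] with t ht w hw
      have hwre : z.re / 2 < w.re := by
        have h1 : |(w - z).re| ≤ ‖w - z‖ := Complex.abs_re_le_norm _
        have h2 : ‖w - z‖ < z.re / 2 := mem_ball_iff_norm.mp hw
        have := neg_le_of_abs_le h1
        simp only [sub_re] at this
        linarith
      have hre : (-(w * (t : ℂ))).re = -(w.re * t) := by simp [Complex.mul_re]
      rw [norm_mul, norm_mul, norm_neg, Complex.norm_exp,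
        hre, Complex.norm_real, Complex.norm_real, Real.norm_eq_abs, Real.norm_eq_abs,
        _root_.abs_of_nonneg (Real.rpow_nonneg (le_of_lt ht) _),
        _root_.abs_of_nonneg (le_of_lt ht)]
      have h3 : t ^ (s - 1) * t = t ^ s := by
        rw [← Real.rpow_add_one (ne_of_gt ht)]; ring_nf
      calc t ^ (s - 1) * (t * Real.exp (-(w.re * t)))
          ≤ t ^ (s - 1) * (t * Real.exp (-(z.re / 2 * t))) := by
            have hexp : Real.exp (-(w.re * t)) ≤ Real.exp (-(z.re / 2 * t)) :=
              Real.exp_le_exp.2 (by have ht2 : (0:ℝ) < t := ht; nlinarith)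
            exact mul_le_mul_of_nonneg_left
              (mul_le_mul_of_nonneg_left hexp (le_of_lt ht))
              (Real.rpow_nonneg (le_of_lt ht) _)
        _ = t ^ s * Real.exp (-(z.re / 2 * t)) := by rw [← h3]; ring
    · exact integrableOn_rpow_mul_exp (by linarith) (half_pos hz')
    · filter_upwards [ae_restrict_mem measurableSet_Ioi] with t _ w _
      have : HasDerivAt (fun w : ℂ => Complex.exp (-(w * t)))
          ((-(t : ℂ)) * Complex.exp (-(w * t))) w := by
        have h1 : HasDerivAt (fun w : ℂ => -(w * t)) (-(t : ℂ)) w :=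
          ((hasDerivAt_id w).mul_const (t : ℂ)).neg.congr_deriv (by simp)
        simpa [mul_comm] using h1.cexp
      exact this.const_mul _
  have hgd : DifferentiableOn ℂ g U := by
    intro z hz
    refine DifferentiableAt.differentiableWithinAt ?_
    exact ((Complex.hasStrictDerivAt_cpow_const (Or.inl hz)).hasDerivAt.differentiableAt.mul_const _)
  -- agreement on positive reals
  have hreal : ∀ r : ℝ, 0 < r → f r = g r := by
    intro r hr
    have key := Complex.integral_cpow_mul_exp_neg_mul_Ioi
      (a := (s : ℂ)) (by simpa using hs) hr
    have h1 : ∫ t : ℝ in Ioi 0, ((t ^ (s - 1) : ℝ) : ℂ) * Complex.exp (-((r : ℂ) * t))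
        = ∫ t : ℝ in Ioi 0, (t : ℂ) ^ ((s : ℂ) - 1) * Complex.exp (-((r : ℂ) * t)) := by
      refine setIntegral_congr_fun measurableSet_Ioi (fun t ht => ?_)
      rw [Complex.ofReal_cpow (le_of_lt ht), Complex.ofReal_sub, Complex.ofReal_one]
    rw [hf_def]
    simp only
    rw [h1, key, hg_def]
    have hrne : (r : ℂ) ≠ 0 := by exact_mod_cast ne_of_gt hr
    rw [one_div, inv_cpow _ _ (by
      rw [Complex.arg_ofReal_of_nonneg (le_of_lt hr)]; exact Real.pi_ne_zero.symm),
      ← cpow_neg]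
  -- identity theorem
  have hfa : AnalyticOnNhd ℂ f U := hfd.analyticOnNhd hUo
  have hga : AnalyticOnNhd ℂ g U := hgd.analyticOnNhd hUo
  have hpre : IsPreconnected U := (convex_halfSpace_re_gt 0).isPreconnected
  have h1U : (1 : ℂ) ∈ U := by simp [hU]
  have hfreq : ∃ᶠ z in nhdsWithin (1 : ℂ) {(1:ℂ)}ᶜ, f z = g z := by
    have htend : Tendsto (fun r : ℝ => (r : ℂ)) (nhdsWithin 1 {(1:ℝ)}ᶜ)
        (nhdsWithin (1 : ℂ) {(1:ℂ)}ᶜ) := by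
      rw [tendsto_nhdsWithin_iff]
      constructor
      · exact (Complex.continuous_ofReal.tendsto 1).mono_left nhdsWithin_le_nhds
      · filter_upwards [self_mem_nhdsWithin] with r hr
        simp only [Set.mem_compl_iff, Set.mem_singleton_iff] at hr ⊢
        exact_mod_cast hr
    refine htend.frequently ?_
    have hev : ∀ᶠ r : ℝ in nhdsWithin 1 {(1:ℝ)}ᶜ, f r = g r := by
      filter_upwards [nhdsWithin_le_nhds (eventually_gt_nhds (by norm_num : (0:ℝ) < 1))]
        with r hr
      exact hreal r hr
    exact hev.frequently
  have := hfa.eqOn_of_preconnected_of_frequently_eq hga hpre h1U hfreq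
  exact this (by simpa [hU] using ha)

lemma exp_factor {a₁ a₂ : ℂ} (ε t : ℝ) (h₁ : a₁ = (ε : ℂ) - Complex.I) (h₂ : a₂ = (ε : ℂ)) :
    Complex.exp (-(a₁ * t)) - Complex.exp (-(a₂ * t))
      = Complex.exp (-(a₂ * t)) * (Complex.exp (Complex.I * t) - 1) := by
  subst h₁; subst h₂
  rw [mul_sub, mul_one, ← Complex.exp_add]
  congr 1
  ring

lemma norm_cexp_neg_mul (a : ℂ) (t : ℝ) :
    ‖Complex.exp (-(a * t))‖ = Real.exp (-(a.re * t)) := by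
  rw [Complex.norm_exp]
  congr 1
  simp [Complex.mul_re]

lemma eps_identity {s : ℝ} (hs1 : -1 < s) (hs0 : s < 0) {ε : ℝ} (hε : 0 < ε) :
    ∫ t : ℝ in Ioi 0, ((t ^ (s - 1) : ℝ) : ℂ) *
        (Complex.exp (-(((ε : ℂ) - Complex.I) * t)) - Complex.exp (-((ε : ℂ) * t)))
      = Complex.Gamma s * (((ε : ℂ) - Complex.I) ^ (-(s : ℂ)) - (ε : ℂ) ^ (-(s : ℂ))) := by
  have hsne : s ≠ 0 := ne_of_lt hs0
  obtain ⟨a₁, ha₁⟩ : ∃ a : ℂ, ((ε : ℂ) - Complex.I) = a := ⟨_, rfl⟩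
  obtain ⟨a₂, ha₂⟩ : ∃ a : ℂ, ((ε : ℂ)) = a := ⟨_, rfl⟩
  rw [ha₁, ha₂]
  have ha₁' : a₁ = (ε : ℂ) - Complex.I := ha₁.symm
  have ha₂' : a₂ = (ε : ℂ) := ha₂.symm
  have e₁ : a₁.re = ε := by rw [ha₁']; simp
  have e₂ : a₂.re = ε := by rw [ha₂']; simp
  have ha₁re : 0 < a₁.re := by rw [e₁]; exact hε
  have ha₂re : 0 < a₂.re := by rw [e₂]; exact hε
  have ha₁ne : a₁ ≠ 0 := fun h => ha₁re.ne' (by rw [h]; simp)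
  have ha₂ne : a₂ ≠ 0 := fun h => ha₂re.ne' (by rw [h]; simp)
  set g : ℝ → ℂ := fun t =>
    ((t ^ s : ℝ) : ℂ) * (Complex.exp (-(a₁ * t)) - Complex.exp (-(a₂ * t))) with hg
  set P1 : ℝ → ℂ := fun t => ((s * t ^ (s - 1) : ℝ) : ℂ) *
    (Complex.exp (-(a₁ * t)) - Complex.exp (-(a₂ * t))) with hP1
  set P2 : ℝ → ℂ := fun t => ((t ^ s : ℝ) : ℂ) *
    (-a₁ * Complex.exp (-(a₁ * t)) + a₂ * Complex.exp (-(a₂ * t))) with hP2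
  have hsm1 : (-1:ℝ) < s := hs1
  -- derivative
  have hderiv : ∀ t ∈ Ioi (0:ℝ), HasDerivAt g (P1 t + P2 t) t := by
    intro t ht
    have ht' : (0:ℝ) < t := ht
    have hA : HasDerivAt (fun u : ℝ => ((u ^ s : ℝ) : ℂ)) ((s * t ^ (s - 1) : ℝ) : ℂ) t :=
      (Real.hasDerivAt_rpow_const (Or.inl ht'.ne')).ofReal_comp
    have hB : ∀ (a : ℂ), HasDerivAt (fun u : ℝ => Complex.exp (-(a * u)))
        (-a * Complex.exp (-(a * t))) t := by
      intro a
      have h1 : HasDerivAt (fun z : ℂ => Complex.exp (-(a * z)))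
          (-a * Complex.exp (-(a * (t:ℂ)))) (t : ℂ) := by
        simpa [mul_comm] using (((hasDerivAt_id ((t:ℝ):ℂ)).const_mul a).neg).cexp
      exact h1.comp_ofReal
    have hB' : HasDerivAt (fun u : ℝ =>
        Complex.exp (-(a₁ * u)) - Complex.exp (-(a₂ * u)))
        (-a₁ * Complex.exp (-(a₁ * t)) + a₂ * Complex.exp (-(a₂ * t))) t := by
      have := (hB a₁).sub (hB a₂)
      exact this.congr_deriv (by ring)
    exact hA.mul hB'
  -- norm bound on the difference of exponentials
  have hnormdiff : ∀ t : ℝ, 0 < t →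
      ‖Complex.exp (-(a₁ * t)) - Complex.exp (-(a₂ * t))‖ ≤ Real.exp (-(ε * t)) * (2 * t) := by
    intro t ht
    rw [exp_factor ε t ha₁' ha₂', norm_mul, norm_cexp_neg_mul, e₂]
    exact mul_le_mul_of_nonneg_left
      ((norm_exp_I_mul_sub_one_le t).trans
        (by rw [abs_of_pos ht]; exact min_le_right _ _)) (Real.exp_pos _).le
  -- integrability of the pieces
  have hmeas1 : AEStronglyMeasurable P1 (volume.restrict (Ioi (0:ℝ))) := by
    apply Measurable.aestronglyMeasurable
    rw [hP1]; fun_prop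
  have hmeas2 : AEStronglyMeasurable P2 (volume.restrict (Ioi (0:ℝ))) := by
    apply Measurable.aestronglyMeasurable
    rw [hP2]; fun_prop
  have hint1 : IntegrableOn P1 (Ioi (0:ℝ)) := by
    refine Integrable.mono' ((integrableOn_rpow_mul_exp hsm1 hε).const_mul (2 * |s|)) hmeas1 ?_
    filter_upwards [ae_restrict_mem measurableSet_Ioi] with t ht
    have ht' : (0:ℝ) < t := ht
    rw [hP1]
    simp only
    rw [norm_mul, Complex.norm_real, Real.norm_eq_abs, abs_mul,
      _root_.abs_of_pos (Real.rpow_pos_of_pos ht' _)]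
    calc |s| * t ^ (s - 1) * ‖Complex.exp (-(a₁ * t)) - Complex.exp (-(a₂ * t))‖
        ≤ |s| * t ^ (s - 1) * (Real.exp (-(ε * t)) * (2 * t)) := by
          exact mul_le_mul_of_nonneg_left (hnormdiff t ht') (by positivity)
      _ = 2 * |s| * (t ^ (s - 1) * t * Real.exp (-(ε * t))) := by ring
      _ = 2 * |s| * (t ^ s * Real.exp (-(ε * t))) := by
          rw [← Real.rpow_add_one ht'.ne' (s - 1)]; ring_nf
  have hint2 : IntegrableOn P2 (Ioi (0:ℝ)) := by
    refine Integrable.mono'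
      ((integrableOn_rpow_mul_exp hsm1 hε).const_mul (‖a₁‖ + ‖a₂‖)) hmeas2 ?_
    filter_upwards [ae_restrict_mem measurableSet_Ioi] with t ht
    have ht' : (0:ℝ) < t := ht
    rw [hP2]
    simp only
    rw [norm_mul, Complex.norm_real, Real.norm_eq_abs,
      _root_.abs_of_pos (Real.rpow_pos_of_pos ht' _)]
    calc t ^ s * ‖-a₁ * Complex.exp (-(a₁ * t)) + a₂ * Complex.exp (-(a₂ * t))‖
        ≤ t ^ s * (‖-a₁ * Complex.exp (-(a₁ * t))‖ + ‖a₂ * Complex.exp (-(a₂ * t))‖) :=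
          mul_le_mul_of_nonneg_left (norm_add_le _ _) (Real.rpow_pos_of_pos ht' _).le
      _ ≤ t ^ s * (‖a₁‖ * Real.exp (-(ε * t)) + ‖a₂‖ * Real.exp (-(ε * t))) := by
          rw [norm_mul, norm_mul, norm_neg, norm_cexp_neg_mul, norm_cexp_neg_mul, e₁, e₂]
      _ = (‖a₁‖ + ‖a₂‖) * (t ^ s * Real.exp (-(ε * t))) := by ring
  -- continuity at 0
  have hg0 : g 0 = 0 := by rw [hg]; simp [Real.zero_rpow hsne]
  have hcont : ContinuousWithinAt g (Ici (0:ℝ)) 0 := by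
    rw [ContinuousWithinAt, hg0]
    apply squeeze_zero_norm' (a := fun t : ℝ => 2 * t ^ (s + 1))
    · filter_upwards [self_mem_nhdsWithin] with t (ht : t ∈ Ici (0:ℝ))
      rcases eq_or_lt_of_le (Set.mem_Ici.mp ht) with h | h
      · have hgt : g t = 0 := by rw [hg, ← h]; simp [Real.zero_rpow hsne]
        rw [hgt, norm_zero]
        positivity
      · rw [hg]
        simp only
        rw [norm_mul, Complex.norm_real, Real.norm_eq_abs,
          _root_.abs_of_pos (Real.rpow_pos_of_pos h _)]
        calc t ^ s * ‖Complex.exp (-(a₁ * t)) - Complex.exp (-(a₂ * t))‖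
            ≤ t ^ s * (Real.exp (-(ε * t)) * (2 * t)) :=
              mul_le_mul_of_nonneg_left (hnormdiff t h) (Real.rpow_pos_of_pos h _).le
          _ ≤ t ^ s * (1 * (2 * t)) := by
              refine mul_le_mul_of_nonneg_left ?_ (Real.rpow_pos_of_pos h _).le
              have : Real.exp (-(ε * t)) ≤ 1 := Real.exp_le_one_iff.2 (by nlinarith)
              nlinarith
          _ = 2 * t ^ (s + 1) := by rw [Real.rpow_add_one h.ne' s]; ring
    · have hc : ContinuousAt (fun t : ℝ => t ^ (s + 1)) 0 :=
        Real.continuousAt_rpow_const 0 (s + 1) (Or.inr (by linarith))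
      have h2 : Tendsto (fun t : ℝ => t ^ (s + 1)) (nhdsWithin 0 (Ici (0:ℝ))) (nhds (0 ^ (s+1))) :=
        hc.tendsto.mono_left nhdsWithin_le_nhds
      have := h2.const_mul (2:ℝ)
      simpa [Real.zero_rpow (by intro h; linarith [h] : s + 1 ≠ 0)] using this
  -- limit at infinity
  have htop : Tendsto g atTop (nhds 0) := by
    apply squeeze_zero_norm' (a := fun t : ℝ => 2 * t ^ s)
    · filter_upwards [eventually_gt_atTop (0:ℝ)] with t ht
      rw [hg]
      simp only
      rw [norm_mul, Complex.norm_real, Real.norm_eq_abs,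
        _root_.abs_of_pos (Real.rpow_pos_of_pos ht _)]
      calc t ^ s * ‖Complex.exp (-(a₁ * t)) - Complex.exp (-(a₂ * t))‖
          ≤ t ^ s * (‖Complex.exp (-(a₁ * t))‖ + ‖Complex.exp (-(a₂ * t))‖) :=
            mul_le_mul_of_nonneg_left (norm_sub_le _ _) (Real.rpow_pos_of_pos ht _).le
        _ ≤ t ^ s * (1 + 1) := by
            refine mul_le_mul_of_nonneg_left ?_ (Real.rpow_pos_of_pos ht _).le
            rw [norm_cexp_neg_mul, norm_cexp_neg_mul, e₁, e₂]
            have : Real.exp (-(ε * t)) ≤ 1 := Real.exp_le_one_iff.2 (by nlinarith)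
            linarith
        _ = 2 * t ^ s := by ring
    · have := (tendsto_rpow_neg_atTop (by linarith : (0:ℝ) < -s)).const_mul (2:ℝ)
      simpa using this
  -- FTC
  have hFTC : ∫ t in Ioi (0:ℝ), (P1 t + P2 t) = 0 - g 0 :=
    integral_Ioi_of_hasDerivAt_of_tendsto hcont hderiv (hint1.add hint2) htop
  rw [hg0, sub_zero] at hFTC
  rw [integral_add hint1 hint2] at hFTC
  -- evaluate the two integrals
  have hI2a : ∫ t in Ioi (0:ℝ), ((t ^ s : ℝ) : ℂ) * Complex.exp (-(a₁ * t))
      = a₁ ^ (-((s:ℂ) + 1)) * Complex.Gamma (s + 1) := by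
    have := cexp_gamma_integral (s := s + 1) (by linarith) ha₁re
    simp only [add_sub_cancel_right] at this
    rw [this]
    push_cast
    ring_nf
  have hI2b : ∫ t in Ioi (0:ℝ), ((t ^ s : ℝ) : ℂ) * Complex.exp (-(a₂ * t))
      = a₂ ^ (-((s:ℂ) + 1)) * Complex.Gamma (s + 1) := by
    have := cexp_gamma_integral (s := s + 1) (by linarith) ha₂re
    simp only [add_sub_cancel_right] at this
    rw [this]
    push_cast
    ring_nf
  have hP1int : ∫ t in Ioi (0:ℝ), P1 t = (s : ℂ) * ∫ t in Ioi (0:ℝ),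
      ((t ^ (s - 1) : ℝ) : ℂ) * (Complex.exp (-(a₁ * t)) - Complex.exp (-(a₂ * t))) := by
    rw [← integral_const_mul]
    refine setIntegral_congr_fun measurableSet_Ioi (fun t _ => ?_)
    rw [hP1]
    push_cast
    ring
  have hP2int : ∫ t in Ioi (0:ℝ), P2 t
      = -a₁ * (a₁ ^ (-((s:ℂ) + 1)) * Complex.Gamma (s + 1))
        + a₂ * (a₂ ^ (-((s:ℂ) + 1)) * Complex.Gamma (s + 1)) := by
    have h1 : IntegrableOn (fun t : ℝ => ((t ^ s : ℝ) : ℂ) * Complex.exp (-(a₁ * t)))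
        (Ioi (0:ℝ)) := integrable_ofReal_rpow_mul_cexp hsm1 ha₁re
    have h2 : IntegrableOn (fun t : ℝ => ((t ^ s : ℝ) : ℂ) * Complex.exp (-(a₂ * t)))
        (Ioi (0:ℝ)) := integrable_ofReal_rpow_mul_cexp hsm1 ha₂re
    have : ∫ t in Ioi (0:ℝ), P2 t
        = (-a₁) * (∫ t in Ioi (0:ℝ), ((t ^ s : ℝ) : ℂ) * Complex.exp (-(a₁ * t)))
          + a₂ * (∫ t in Ioi (0:ℝ), ((t ^ s : ℝ) : ℂ) * Complex.exp (-(a₂ * t))) := by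
      rw [← integral_const_mul, ← integral_const_mul, ← integral_add (h1.const_mul _)
        (h2.const_mul _)]
      refine setIntegral_congr_fun measurableSet_Ioi (fun t _ => ?_)
      rw [hP2]
      ring
    rw [this, hI2a, hI2b]
  -- combine
  have hkey : (s : ℂ) * ∫ t in Ioi (0:ℝ),
      ((t ^ (s - 1) : ℝ) : ℂ) * (Complex.exp (-(a₁ * t)) - Complex.exp (-(a₂ * t)))
      = a₁ ^ (-(s:ℂ)) * Complex.Gamma (s + 1) - a₂ ^ (-(s:ℂ)) * Complex.Gamma (s + 1) := by
    have hpow : ∀ (a : ℂ), a ≠ 0 → a * a ^ (-((s:ℂ) + 1)) = a ^ (-(s:ℂ)) := by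
      intro a ha
      have : a ^ (-(s:ℂ)) = a ^ (-((s:ℂ) + 1) + 1) := by ring_nf
      rw [this, Complex.cpow_add _ _ ha, Complex.cpow_one]
      ring
    have := hFTC
    rw [hP1int, hP2int] at this
    have h' : (s:ℂ) * ∫ t in Ioi (0:ℝ),
        ((t ^ (s - 1) : ℝ) : ℂ) * (Complex.exp (-(a₁ * t)) - Complex.exp (-(a₂ * t)))
        = a₁ * (a₁ ^ (-((s:ℂ) + 1)) * Complex.Gamma (s + 1))
          - a₂ * (a₂ ^ (-((s:ℂ) + 1)) * Complex.Gamma (s + 1)) := by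
      linear_combination this
    rw [h'] at *
    rw [← mul_assoc, ← mul_assoc, hpow a₁ ha₁ne, hpow a₂ ha₂ne]
  have hGam : Complex.Gamma ((s:ℂ) + 1) = (s:ℂ) * Complex.Gamma s := by
    rw [Complex.Gamma_add_one _ (by exact_mod_cast hsne)]
  have hsC : (s : ℂ) ≠ 0 := by exact_mod_cast hsne
  have : (s : ℂ) * ∫ t in Ioi (0:ℝ),
      ((t ^ (s - 1) : ℝ) : ℂ) * (Complex.exp (-(a₁ * t)) - Complex.exp (-(a₂ * t)))
      = (s:ℂ) * (Complex.Gamma s * (a₁ ^ (-(s:ℂ)) - a₂ ^ (-(s:ℂ)))) := by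
    rw [hkey]
    push_cast [hGam]
    ring
  exact mul_left_cancel₀ hsC this

lemma bound_integrableOn_Ioi {s : ℝ} (hs1 : -1 < s) (hs0 : s < 0) :
    IntegrableOn (fun t : ℝ => t ^ (s - 1) * min 2 (2 * t)) (Ioi (0:ℝ)) := by
  have hmeas : AEStronglyMeasurable (fun t : ℝ => t ^ (s - 1) * min 2 (2 * t))
      (volume.restrict (Ioi (0:ℝ))) := by
    apply Measurable.aestronglyMeasurable
    fun_prop
  rw [← Ioc_union_Ioi_eq_Ioi (zero_le_one : (0:ℝ) ≤ 1), integrableOn_union]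
  constructor
  · have hsint : IntegrableOn (fun t : ℝ => t ^ s) (Ioc (0:ℝ) 1) := by
      have := intervalIntegral.intervalIntegrable_rpow' (a := 0) (b := 1) hs1
      rwa [intervalIntegrable_iff_integrableOn_Ioc_of_le zero_le_one] at this
    refine Integrable.mono' (hsint.const_mul 2) (hmeas.mono_measure
      (Measure.restrict_mono Ioc_subset_Ioi_self le_rfl)) ?_
    · filter_upwards [ae_restrict_mem measurableSet_Ioc] with t ht
      rw [Real.norm_eq_abs, abs_mul, _root_.abs_of_pos (Real.rpow_pos_of_pos ht.1 _),
        _root_.abs_of_nonneg (le_min (by norm_num) (by linarith [ht.1.le]))]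
      calc t ^ (s - 1) * min 2 (2 * t) ≤ t ^ (s - 1) * (2 * t) :=
            mul_le_mul_of_nonneg_left (min_le_right _ _) (Real.rpow_pos_of_pos ht.1 _).le
        _ = 2 * (t ^ (s - 1) * t) := by ring
        _ = 2 * t ^ s := by rw [← Real.rpow_add_one ht.1.ne' (s - 1)]; ring_nf
  · have hsint : IntegrableOn (fun t : ℝ => t ^ (s - 1)) (Ioi (1:ℝ)) :=
      integrableOn_Ioi_rpow_of_lt (by linarith) one_pos
    refine Integrable.mono' (hsint.const_mul 2) (hmeas.mono_measure
      (Measure.restrict_mono (Ioi_subset_Ioi zero_le_one) le_rfl)) ?_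
    filter_upwards [ae_restrict_mem measurableSet_Ioi] with t ht
    have ht1 : (1:ℝ) < t := ht
    rw [Real.norm_eq_abs, abs_mul, _root_.abs_of_pos (Real.rpow_pos_of_pos (by linarith) _),
      _root_.abs_of_nonneg (le_min (by norm_num) (by linarith))]
    calc t ^ (s - 1) * min 2 (2 * t) ≤ t ^ (s - 1) * 2 :=
          mul_le_mul_of_nonneg_left (min_le_left _ _)
            (Real.rpow_pos_of_pos (by linarith) _).le
      _ = 2 * t ^ (s - 1) := by ring

lemma mellin_value {s : ℝ} (hs1 : -1 < s) (hs0 : s < 0) :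
    ∫ t : ℝ in Ioi 0, ((t ^ (s - 1) : ℝ) : ℂ) * (Complex.exp (Complex.I * t) - 1)
      = Complex.Gamma s * Complex.exp (Complex.I * ((Real.pi : ℂ) * s / 2)) := by
  -- LHS limit via dominated convergence along ε → 0⁺
  have hLHS : Tendsto (fun ε : ℝ => ∫ t : ℝ in Ioi 0, ((t ^ (s - 1) : ℝ) : ℂ) *
      (Complex.exp (-(((ε : ℂ) - Complex.I) * t)) - Complex.exp (-((ε : ℂ) * t))))
      (nhdsWithin 0 (Ioi 0))
      (nhds (∫ t : ℝ in Ioi 0, ((t ^ (s - 1) : ℝ) : ℂ) * (Complex.exp (Complex.I * t) - 1))) := by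
    refine tendsto_integral_filter_of_dominated_convergence
      (fun t : ℝ => t ^ (s - 1) * min 2 (2 * t)) ?_ ?_ (bound_integrableOn_Ioi hs1 hs0) ?_
    · filter_upwards with ε
      apply Measurable.aestronglyMeasurable
      fun_prop
    · filter_upwards [self_mem_nhdsWithin] with ε (hε : (0:ℝ) < ε)
      filter_upwards [ae_restrict_mem measurableSet_Ioi] with t ht
      have ht' : (0:ℝ) < t := ht
      rw [norm_mul, Complex.norm_real, Real.norm_eq_abs,
        _root_.abs_of_pos (Real.rpow_pos_of_pos ht' _),
        exp_factor ε t rfl rfl, norm_mul, norm_cexp_neg_mul]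
      simp only [Complex.ofReal_re]
      calc t ^ (s - 1) * (Real.exp (-(ε * t)) * ‖Complex.exp (Complex.I * t) - 1‖)
          ≤ t ^ (s - 1) * (1 * min 2 (2 * |t|)) := by
            refine mul_le_mul_of_nonneg_left ?_ (Real.rpow_pos_of_pos ht' _).le
            exact mul_le_mul (Real.exp_le_one_iff.2 (by nlinarith))
              (norm_exp_I_mul_sub_one_le t) (norm_nonneg _) zero_le_one
        _ = t ^ (s - 1) * min 2 (2 * t) := by rw [one_mul, abs_of_pos ht']
    · filter_upwards [ae_restrict_mem measurableSet_Ioi] with t ht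
      have ht' : (0:ℝ) < t := ht
      have hc : Tendsto (fun ε : ℝ =>
          Complex.exp (-(((ε : ℂ) - Complex.I) * t)) - Complex.exp (-((ε : ℂ) * t)))
          (nhdsWithin 0 (Ioi 0)) (nhds (Complex.exp (Complex.I * t) - 1)) := by
        have hcont : Continuous (fun ε : ℝ =>
            Complex.exp (-(((ε : ℂ) - Complex.I) * t)) - Complex.exp (-((ε : ℂ) * t))) := by
          fun_prop
        have := (hcont.tendsto 0).mono_left (nhdsWithin_le_nhds (s := Ioi (0:ℝ)))
        simpa using this
      exact (hc.const_mul _)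
  -- RHS limit
  have hRHS : Tendsto (fun ε : ℝ =>
      Complex.Gamma s * (((ε : ℂ) - Complex.I) ^ (-(s : ℂ)) - (ε : ℂ) ^ (-(s : ℂ))))
      (nhdsWithin 0 (Ioi 0))
      (nhds (Complex.Gamma s * ((-Complex.I) ^ (-(s : ℂ)) - 0))) := by
    refine Tendsto.const_mul _ (Tendsto.sub ?_ ?_)
    · have h1 : Tendsto (fun ε : ℝ => (ε : ℂ) - Complex.I) (nhdsWithin 0 (Ioi 0))
          (nhds (-Complex.I)) := by
        have : Continuous (fun ε : ℝ => (ε : ℂ) - Complex.I) := by fun_prop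
        have := (this.tendsto 0).mono_left (nhdsWithin_le_nhds (s := Ioi (0:ℝ)))
        simpa using this
      have h2 : ContinuousAt (fun z : ℂ => z ^ (-(s:ℂ))) (-Complex.I) :=
        continuousAt_cpow_const (Or.inr (by simp))
      exact h2.tendsto.comp h1
    · apply squeeze_zero_norm' (a := fun ε : ℝ => ε ^ (-s))
      · filter_upwards [self_mem_nhdsWithin] with ε (hε : (0:ℝ) < ε)
        rw [Complex.norm_cpow_eq_rpow_re_of_pos hε]
        simp
      · have hc : ContinuousAt (fun ε : ℝ => ε ^ (-s)) 0 :=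
          Real.continuousAt_rpow_const 0 (-s) (Or.inr (by linarith))
        have := hc.tendsto.mono_left (nhdsWithin_le_nhds (s := Ioi (0:ℝ)))
        simpa [Real.zero_rpow (by linarith : -s ≠ 0)] using this
  -- identify the limits
  have heq : ∀ ε ∈ Ioi (0:ℝ), (fun ε : ℝ => ∫ t : ℝ in Ioi 0, ((t ^ (s - 1) : ℝ) : ℂ) *
      (Complex.exp (-(((ε : ℂ) - Complex.I) * t)) - Complex.exp (-((ε : ℂ) * t)))) ε
      = (fun ε : ℝ =>
        Complex.Gamma s * (((ε : ℂ) - Complex.I) ^ (-(s : ℂ)) - (ε : ℂ) ^ (-(s : ℂ)))) ε :=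
    fun ε hε => eps_identity hs1 hs0 hε
  have hRHS' : Tendsto (fun ε : ℝ => ∫ t : ℝ in Ioi 0, ((t ^ (s - 1) : ℝ) : ℂ) *
      (Complex.exp (-(((ε : ℂ) - Complex.I) * t)) - Complex.exp (-((ε : ℂ) * t))))
      (nhdsWithin 0 (Ioi 0))
      (nhds (Complex.Gamma s * ((-Complex.I) ^ (-(s : ℂ)) - 0))) := by
    refine hRHS.congr' ?_
    filter_upwards [self_mem_nhdsWithin] with ε hε
    exact (heq ε hε).symm
  have := tendsto_nhds_unique hLHS hRHS'
  rw [this, sub_zero]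
  congr 1
  -- (-I) ^ (-s) = exp (I * π * s / 2)
  rw [Complex.cpow_def_of_ne_zero (by simp : (-Complex.I) ≠ 0), Complex.log_neg_I]
  congr 1
  push_cast
  ring

lemma bound_integrable_real {s : ℝ} (hs1 : -1 < s) (hs0 : s < 0) :
    Integrable (fun u : ℝ => |u| ^ (s - 1) * min 2 (2 * |u|)) := by
  have hIoi : IntegrableOn (fun u : ℝ => |u| ^ (s - 1) * min 2 (2 * |u|)) (Ioi (0:ℝ)) := by
    refine (bound_integrableOn_Ioi hs1 hs0).congr_fun (fun u hu => ?_) measurableSet_Ioi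
    rw [abs_of_pos hu]
  have hIci : IntegrableOn (fun u : ℝ => |u| ^ (s - 1) * min 2 (2 * |u|)) (Ici (0:ℝ)) := by
    rwa [integrableOn_Ici_iff_integrableOn_Ioi]
  have h_map_neg : ((volume : Measure ℝ).restrict (Ici (0:ℝ))).map Neg.neg
      = volume.restrict (Iic (0:ℝ)) := by
    conv => rhs; rw [← Measure.map_neg_eq_self (volume : Measure ℝ),
      measurableEmbedding_neg.restrict_map]
    simp
  have hIic : IntegrableOn (fun u : ℝ => |u| ^ (s - 1) * min 2 (2 * |u|)) (Iic (0:ℝ)) := by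
    rw [IntegrableOn, ← h_map_neg, measurableEmbedding_neg.integrable_map_iff]
    refine hIci.congr_fun (fun u _ => ?_) measurableSet_Ici
    simp [Function.comp, abs_neg]
  rw [← integrableOn_univ, ← Iic_union_Ioi (a := (0:ℝ)), integrableOn_union]
  exact ⟨hIic, hIoi⟩

lemma norm_f_le (hs : s = q - α) (hα : 0 < 1 + α) (u : ℝ) (hu : u ≠ 0) :
    ‖(u:ℂ) ^ q * (Complex.exp (Complex.I * u) - 1) / ((|u| ^ (1 + α) : ℝ) : ℂ)‖
      ≤ |u| ^ (s - 1) * min 2 (2 * |u|) := by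
  have hu' : 0 < |u| := abs_pos.mpr hu
  rw [norm_div, norm_mul, Complex.norm_real, Real.norm_eq_abs,
    _root_.abs_of_pos (Real.rpow_pos_of_pos hu' _), norm_pow, Complex.norm_real,
    Real.norm_eq_abs]
  rw [div_le_iff₀ (Real.rpow_pos_of_pos hu' _)]
  have key : |u| ^ (s - 1) * |u| ^ (1 + α) = |u| ^ (q : ℝ) := by
    rw [← Real.rpow_add hu']
    congr 1
    rw [hs]; ring
  calc |u| ^ q * ‖Complex.exp (Complex.I * u) - 1‖
      ≤ |u| ^ q * min 2 (2 * |u|) :=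
        mul_le_mul_of_nonneg_left (norm_exp_I_mul_sub_one_le u) (pow_nonneg (abs_nonneg u) q)
    _ = |u| ^ (s - 1) * min 2 (2 * |u|) * |u| ^ (1 + α) := by
        rw [mul_right_comm, key, Real.rpow_natCast]

lemma f_eq_on_Ioi (hs : s = q - α) (u : ℝ) (hu : 0 < u) :
    (u:ℂ) ^ q * (Complex.exp (Complex.I * u) - 1) / ((|u| ^ (1 + α) : ℝ) : ℂ)
      = ((u ^ (s - 1) : ℝ) : ℂ) * (Complex.exp (Complex.I * u) - 1) := by
  rw [abs_of_pos hu]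
  have h1 : ((u:ℂ)) ^ q = (((u ^ q : ℝ)) : ℂ) := by push_cast; ring
  have h2 : ((u ^ (s - 1) : ℝ) : ℂ) = ((u ^ (q:ℕ) : ℝ) : ℂ) / ((u ^ (1 + α) : ℝ) : ℂ) := by
    rw [← Complex.ofReal_div]
    congr 1
    rw [← Real.rpow_natCast u q, ← Real.rpow_sub hu]
    congr 1
    rw [hs]; ring
  rw [h1, h2]
  ring

lemma f_measurable (hα : 0 < 1 + α) :
    AEStronglyMeasurable
      (fun u : ℝ => (u:ℂ) ^ q * (Complex.exp (Complex.I * u) - 1) / ((|u| ^ (1 + α) : ℝ) : ℂ))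
      volume := by
  apply Measurable.aestronglyMeasurable
  fun_prop

lemma f_integrable (hq : Even q) (hs : s = q - α) (hα : 0 < 1 + α)
    (hs1 : -1 < s) (hs0 : s < 0) :
    Integrable (fun u : ℝ =>
      (u:ℂ) ^ q * (Complex.exp (Complex.I * u) - 1) / ((|u| ^ (1 + α) : ℝ) : ℂ)) := by
  refine Integrable.mono' (bound_integrable_real hs1 hs0) (f_measurable hα) ?_
  have h0 : ∀ᵐ u : ℝ, u ≠ (0:ℝ) := by
    refine ae_iff.mpr ?_
    simp only [ne_eq, not_not]
    have h : {a : ℝ | a = 0} = {(0:ℝ)} := by ext; simp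
    rw [h]
    exact Real.volume_singleton
  filter_upwards [h0] with u hu
  exact norm_f_le hs hα u hu

lemma f_neg (hq : Even q) (u : ℝ) :
    ((-u : ℝ):ℂ) ^ q * (Complex.exp (Complex.I * (-u : ℝ)) - 1) / ((|(-u : ℝ)| ^ (1 + α) : ℝ) : ℂ)
      = (starRingEnd ℂ)
        ((u:ℂ) ^ q * (Complex.exp (Complex.I * u) - 1) / ((|u| ^ (1 + α) : ℝ) : ℂ)) := by
  rw [map_div₀, map_mul, map_pow]
  rw [Complex.conj_ofReal, Complex.conj_ofReal]
  rw [abs_neg]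
  congr 1
  congr 1
  · push_cast
    exact hq.neg_pow (u : ℂ)
  · rw [map_sub, map_one, ← Complex.exp_conj]
    congr 1
    rw [map_mul, Complex.conj_I, Complex.conj_ofReal]
    push_cast
    ring

lemma full_line_value (hq : Even q) (hs : s = q - α) (hα : 0 < 1 + α)
    (hs1 : -1 < s) (hs0 : s < 0) :
    ∫ u : ℝ, (u:ℂ) ^ q * (Complex.exp (Complex.I * u) - 1) / ((|u| ^ (1 + α) : ℝ) : ℂ)
      = ((2 * Real.Gamma s * Real.cos (s * Real.pi / 2) : ℝ) : ℂ) := by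
  set f : ℝ → ℂ := fun u =>
    (u:ℂ) ^ q * (Complex.exp (Complex.I * u) - 1) / ((|u| ^ (1 + α) : ℝ) : ℂ) with hf
  have hint := f_integrable hq hs hα hs1 hs0
  have hsplit : (∫ u in Ioi (0:ℝ), f u) + ∫ u in Iic (0:ℝ), f u = ∫ u, f u := by
    have := integral_add_compl (measurableSet_Ioi (a := (0:ℝ))) hint
    rwa [compl_Ioi] at this
  have hM : ∫ u in Ioi (0:ℝ), f u
      = Complex.Gamma s * Complex.exp (Complex.I * ((Real.pi : ℂ) * s / 2)) := by
    rw [← mellin_value hs1 hs0]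
    refine setIntegral_congr_fun measurableSet_Ioi (fun u hu => ?_)
    exact f_eq_on_Ioi hs u hu
  have hIic : ∫ u in Iic (0:ℝ), f u = (starRingEnd ℂ) (∫ u in Ioi (0:ℝ), f u) := by
    rw [← integral_conj]
    have := integral_comp_neg_Ioi (0:ℝ) f
    rw [neg_zero] at this
    rw [← this]
    refine setIntegral_congr_fun measurableSet_Ioi (fun u _ => ?_)
    exact f_neg hq u
  rw [← hsplit, hIic, hM, Complex.add_conj]
  have hre : (Complex.Gamma s * Complex.exp (Complex.I * ((Real.pi : ℂ) * s / 2))).re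
      = Real.Gamma s * Real.cos (s * Real.pi / 2) := by
    rw [Complex.Gamma_ofReal]
    have harg : Complex.I * ((Real.pi : ℂ) * s / 2) = ((s * Real.pi / 2 : ℝ) : ℂ) * Complex.I := by
      push_cast; ring
    have hgen : ∀ (a b c : ℝ), ((a:ℂ) * ((b:ℂ) + (c:ℂ) * Complex.I)).re = a * b := by
      intros a b c
      simp [Complex.mul_re]
    rw [harg, Complex.exp_mul_I, ← Complex.ofReal_cos, ← Complex.ofReal_sin]
    exact hgen _ _ _
  rw [hre]
  push_cast
  ring

lemma G_tendsto (hq : Even q) (hs : s = q - α) (hα : 0 < 1 + α)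
    (hs1 : -1 < s) (hs0 : s < 0) :
    Tendsto (fun θ : ℝ => ∫ u : ℝ, (u:ℂ) ^ q * (Complex.exp (Complex.I * u) - 1) /
        ((θ ^ (1 + α) + |u| ^ (1 + α) : ℝ) : ℂ))
      (nhdsWithin 0 (Ioi 0))
      (nhds (((2 * Real.Gamma s * Real.cos (s * Real.pi / 2) : ℝ) : ℂ))) := by
  rw [← full_line_value hq hs hα hs1 hs0]
  refine tendsto_integral_filter_of_dominated_convergence
    (fun u : ℝ => |u| ^ (s - 1) * min 2 (2 * |u|)) ?_ ?_ (bound_integrable_real hs1 hs0) ?_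
  · filter_upwards with θ
    apply Measurable.aestronglyMeasurable
    fun_prop
  · filter_upwards [self_mem_nhdsWithin] with θ (hθ : (0:ℝ) < θ)
    have h0 : ∀ᵐ u : ℝ, u ≠ (0:ℝ) := by
      refine ae_iff.mpr ?_
      simp only [ne_eq, not_not]
      have h : {a : ℝ | a = 0} = {(0:ℝ)} := by ext; simp
      rw [h]
      exact Real.volume_singleton
    filter_upwards [h0] with u hu
    have hu' : (0:ℝ) < |u| := abs_pos.mpr hu
    have hden : (0:ℝ) < |u| ^ (1 + α) := Real.rpow_pos_of_pos hu' _
    have hden2 : |u| ^ (1 + α) ≤ θ ^ (1 + α) + |u| ^ (1 + α) := by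
      have : (0:ℝ) ≤ θ ^ (1 + α) := (Real.rpow_pos_of_pos hθ _).le
      linarith
    have hDpos : (0:ℝ) < θ ^ (1 + α) + |u| ^ (1 + α) := lt_of_lt_of_le hden hden2
    calc ‖(u:ℂ) ^ q * (Complex.exp (Complex.I * u) - 1) /
          ((θ ^ (1 + α) + |u| ^ (1 + α) : ℝ) : ℂ)‖
        = ‖(u:ℂ) ^ q * (Complex.exp (Complex.I * u) - 1)‖ / (θ ^ (1 + α) + |u| ^ (1 + α)) := by
          rw [norm_div, Complex.norm_real, Real.norm_eq_abs, _root_.abs_of_pos hDpos]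
      _ ≤ ‖(u:ℂ) ^ q * (Complex.exp (Complex.I * u) - 1)‖ / (|u| ^ (1 + α)) := by
          exact div_le_div_of_nonneg_left (norm_nonneg _) hden hden2
      _ = ‖(u:ℂ) ^ q * (Complex.exp (Complex.I * u) - 1) / ((|u| ^ (1 + α) : ℝ) : ℂ)‖ := by
          rw [norm_div, Complex.norm_real, Real.norm_eq_abs, _root_.abs_of_pos hden]
      _ ≤ |u| ^ (s - 1) * min 2 (2 * |u|) := norm_f_le hs hα u hu
  · have h0 : ∀ᵐ u : ℝ, u ≠ (0:ℝ) := by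
      refine ae_iff.mpr ?_
      simp only [ne_eq, not_not]
      have h : {a : ℝ | a = 0} = {(0:ℝ)} := by ext; simp
      rw [h]
      exact Real.volume_singleton
    filter_upwards [h0] with u hu
    have hu' : (0:ℝ) < |u| := abs_pos.mpr hu
    have hden : (0:ℝ) < |u| ^ (1 + α) := Real.rpow_pos_of_pos hu' _
    have hcont : Tendsto (fun θ : ℝ => ((θ ^ (1 + α) + |u| ^ (1 + α) : ℝ) : ℂ))
        (nhdsWithin 0 (Ioi 0)) (nhds ((|u| ^ (1 + α) : ℝ) : ℂ)) := by
      have h1 : ContinuousAt (fun θ : ℝ => θ ^ (1 + α)) 0 :=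
        Real.continuousAt_rpow_const 0 (1 + α) (Or.inr (by linarith))
      have h2 : Tendsto (fun θ : ℝ => θ ^ (1 + α) + |u| ^ (1 + α)) (nhdsWithin 0 (Ioi 0))
          (nhds ((0:ℝ) ^ (1 + α) + |u| ^ (1 + α))) :=
        ((h1.tendsto).add tendsto_const_nhds).mono_left (nhdsWithin_le_nhds (s := Ioi (0:ℝ)))
      rw [Real.zero_rpow (by linarith : 1 + α ≠ 0), zero_add] at h2
      exact (Complex.continuous_ofReal.tendsto _).comp h2
    exact Tendsto.div tendsto_const_nhds hcont
      (by exact_mod_cast hden.ne')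

lemma subst_identity {θ : ℝ} (hθ : 0 < θ) (hα : 0 < 1 + α) :
    (∫ x : ℝ, ((x:ℂ) ^ q * (Complex.exp (Complex.I * θ * x) - 1)) /
        ((1 + |x| ^ (1 + α) : ℝ) : ℂ))
      = ((θ ^ (α - (q:ℝ)) : ℝ) : ℂ) * ∫ u : ℝ, (u:ℂ) ^ q * (Complex.exp (Complex.I * u) - 1) /
        ((θ ^ (1 + α) + |u| ^ (1 + α) : ℝ) : ℂ) := by
  have hθC : (θ : ℂ) ≠ 0 := by exact_mod_cast hθ.ne'
  have hT : (0:ℝ) < θ ^ (1 + α) := Real.rpow_pos_of_pos hθ _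
  set g : ℝ → ℂ := fun x => ((x:ℂ) ^ q * (Complex.exp (Complex.I * θ * x) - 1)) /
    ((1 + |x| ^ (1 + α) : ℝ) : ℂ) with hg
  have h := MeasureTheory.Measure.integral_comp_inv_mul_left g θ
  rw [abs_of_pos hθ] at h
  -- h : ∫ u, g (θ⁻¹ * u) = θ • ∫ x, g x
  have hpt : ∀ u : ℝ, g (θ⁻¹ * u)
      = ((θ⁻¹ ^ q * θ ^ (1 + α) : ℝ) : ℂ) * ((u:ℂ) ^ q * (Complex.exp (Complex.I * u) - 1) /
        ((θ ^ (1 + α) + |u| ^ (1 + α) : ℝ) : ℂ)) := by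
    intro u
    have hDpos : (0:ℝ) < θ ^ (1 + α) + |u| ^ (1 + α) := by
      have : (0:ℝ) ≤ |u| ^ (1 + α) := Real.rpow_nonneg (abs_nonneg u) _
      linarith
    have hexp : Complex.I * (θ : ℂ) * ((θ⁻¹ * u : ℝ) : ℂ) = Complex.I * u := by
      push_cast
      rw [mul_assoc]
      congr 1
      rw [← mul_assoc, mul_inv_cancel₀ hθC, one_mul]
    have hden : (1 : ℝ) + |θ⁻¹ * u| ^ (1 + α)
        = (θ ^ (1 + α))⁻¹ * (θ ^ (1 + α) + |u| ^ (1 + α)) := by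
      rw [abs_mul, abs_of_pos (inv_pos.2 hθ),
        Real.mul_rpow (inv_nonneg.2 hθ.le) (abs_nonneg u), Real.inv_rpow hθ.le]
      field_simp
    rw [hg]
    simp only
    rw [hexp, hden]
    have hpow : (((θ⁻¹ * u : ℝ)) : ℂ) ^ q = ((θ⁻¹ ^ q : ℝ) : ℂ) * ((u : ℂ)) ^ q := by
      push_cast
      rw [mul_pow]
    rw [hpow]
    push_cast
    have hTC : ((θ ^ (1 + α) : ℝ) : ℂ) ≠ 0 := by exact_mod_cast hT.ne'
    have hDC : ((θ ^ (1 + α) + |u| ^ (1 + α) : ℝ) : ℂ) ≠ 0 := by exact_mod_cast hDpos.ne'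
    push_cast at hTC hDC
    field_simp
  rw [funext hpt] at h
  rw [integral_const_mul] at h
  have hfinal : (θ : ℝ) • (∫ x : ℝ, g x) = (θ:ℂ) * ∫ x : ℝ, g x := real_smul
  -- from h : c * G = θ • F
  have h3 : (θ : ℂ) * ∫ x : ℝ, g x = ((θ⁻¹ ^ q * θ ^ (1 + α) : ℝ) : ℂ) *
      ∫ u : ℝ, (u:ℂ) ^ q * (Complex.exp (Complex.I * u) - 1) /
        ((θ ^ (1 + α) + |u| ^ (1 + α) : ℝ) : ℂ) := by
    rw [← hfinal]
    exact h.symm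
  have h2 : (∫ x : ℝ, g x) = (θ : ℂ)⁻¹ * (((θ⁻¹ ^ q * θ ^ (1 + α) : ℝ) : ℂ) *
      ∫ u : ℝ, (u:ℂ) ^ q * (Complex.exp (Complex.I * u) - 1) /
        ((θ ^ (1 + α) + |u| ^ (1 + α) : ℝ) : ℂ)) :=
    (eq_inv_mul_iff_mul_eq₀ hθC).mpr h3
  rw [h2, ← mul_assoc]
  congr 1
  rw [← Complex.ofReal_inv, ← Complex.ofReal_mul]
  congr 1
  have e1 : θ ^ (α - (q:ℝ)) = θ ^ (-1:ℝ) * (θ ^ (-(q:ℝ)) * θ ^ (1 + α)) := by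
    rw [← Real.rpow_add hθ, ← Real.rpow_add hθ]
    congr 1
    ring
  rw [e1, Real.rpow_neg hθ.le 1, Real.rpow_one, Real.rpow_neg hθ.le, Real.rpow_natCast,
    ← inv_pow]

end ParetoAux

open ParetoAux Set Complex in
/-- For non-integer `α > 2` with `q = ⌊α⌋` even, as `θ → 0⁺`,
`∫ x, x^q (e^{iθx} - 1) / (1 + |x|^(1+α)) dx ∼ 2 θ^(α-q) Γ(q-α) cos((q-α)π/2)`. -/
theorem pareto_noninteger_evenpart_integral_asymptotic (α : ℝ) (hα : 2 < α)
    (hnotint : ∀ m : ℤ, (m : ℝ) ≠ α) (heven : Even ⌊α⌋) :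
    Tendsto (fun θ : ℝ =>
        (∫ x : ℝ, ((x : ℂ) ^ ⌊α⌋.toNat * (Complex.exp (Complex.I * θ * x) - 1)) /
            ((1 + |x| ^ (1 + α) : ℝ) : ℂ)) /
          ((2 * θ ^ (α - (⌊α⌋ : ℝ)) * Real.Gamma ((⌊α⌋ : ℝ) - α) *
              Real.cos (((⌊α⌋ : ℝ) - α) * Real.pi / 2) : ℝ) : ℂ))
      (nhdsWithin 0 (Set.Ioi 0)) (nhds 1) := by
  have hfloor2 : (2:ℤ) ≤ ⌊α⌋ := by
    rw [Int.le_floor]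
    exact_mod_cast hα.le
  have hfloor_nonneg : (0:ℤ) ≤ ⌊α⌋ := by omega
  set q : ℕ := ⌊α⌋.toNat with hqdef
  have hqcast : ((q:ℤ)) = ⌊α⌋ := Int.toNat_of_nonneg hfloor_nonneg
  have hqR : ((⌊α⌋ : ℝ)) = (q:ℝ) := by exact_mod_cast hqcast.symm
  rw [show (fun θ : ℝ =>
        (∫ x : ℝ, ((x : ℂ) ^ q * (Complex.exp (Complex.I * θ * x) - 1)) /
            ((1 + |x| ^ (1 + α) : ℝ) : ℂ)) /
          ((2 * θ ^ (α - (⌊α⌋ : ℝ)) * Real.Gamma ((⌊α⌋ : ℝ) - α) *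
              Real.cos (((⌊α⌋ : ℝ) - α) * Real.pi / 2) : ℝ) : ℂ))
      = (fun θ : ℝ =>
        (∫ x : ℝ, ((x : ℂ) ^ q * (Complex.exp (Complex.I * θ * x) - 1)) /
            ((1 + |x| ^ (1 + α) : ℝ) : ℂ)) /
          ((2 * θ ^ (α - (q : ℝ)) * Real.Gamma ((q : ℝ) - α) *
              Real.cos (((q : ℝ) - α) * Real.pi / 2) : ℝ) : ℂ)) by rw [hqR]]
  set s : ℝ := (q:ℝ) - α with hsdef
  have hs0 : s < 0 := by
    have h1 : ((⌊α⌋:ℤ):ℝ) ≤ α := Int.floor_le α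
    have h2 : ((⌊α⌋:ℤ):ℝ) ≠ α := hnotint ⌊α⌋
    rw [hsdef]
    rw [← hqR]
    cases' lt_or_eq_of_le h1 with h h
    · linarith
    · exact absurd h h2
  have hs1 : -1 < s := by
    have := Int.lt_floor_add_one α
    rw [hsdef, ← hqR]
    push_cast at this ⊢
    linarith
  have hαpos : (0:ℝ) < 1 + α := by linarith
  have hqeven : Even q := by
    have : Even ((q:ℤ)) := hqcast ▸ heven
    exact_mod_cast this
  have hGamma_ne : Real.Gamma s ≠ 0 := by
    refine Real.Gamma_ne_zero (fun m => ?_)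
    cases m with
    | zero => simpa using hs0.ne
    | succ n =>
      intro h
      rw [h] at hs1
      push_cast at hs1
      linarith
  have hcos_pos : 0 < Real.cos (s * Real.pi / 2) := by
    refine Real.cos_pos_of_mem_Ioo ⟨?_, ?_⟩
    · nlinarith [Real.pi_pos]
    · nlinarith [Real.pi_pos]
  have hD_ne : (2 * Real.Gamma s * Real.cos (s * Real.pi / 2)) ≠ 0 :=
    mul_ne_zero (mul_ne_zero two_ne_zero hGamma_ne) hcos_pos.ne'
  have hne : ((2 * Real.Gamma s * Real.cos (s * Real.pi / 2) : ℝ) : ℂ) ≠ 0 := by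
    exact_mod_cast hD_ne
  have hG := G_tendsto hqeven hsdef hαpos hs1 hs0
  have h1 : Tendsto (fun θ : ℝ =>
      (∫ u : ℝ, (u:ℂ) ^ q * (Complex.exp (Complex.I * u) - 1) /
        ((θ ^ (1 + α) + |u| ^ (1 + α) : ℝ) : ℂ)) /
      ((2 * Real.Gamma s * Real.cos (s * Real.pi / 2) : ℝ) : ℂ))
      (nhdsWithin 0 (Ioi 0)) (nhds 1) := by
    have := hG.div_const (((2 * Real.Gamma s * Real.cos (s * Real.pi / 2) : ℝ) : ℂ))
    rwa [div_self hne] at this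
  refine Tendsto.congr' ?_ h1
  filter_upwards [self_mem_nhdsWithin] with θ (hθ : (0:ℝ) < θ)
  have hpow_ne : ((θ ^ (α - (q:ℝ)) : ℝ) : ℂ) ≠ 0 := by
    exact_mod_cast (Real.rpow_pos_of_pos hθ _).ne'
  rw [subst_identity hθ hαpos]
  have hsplit : ((2 * θ ^ (α - (q : ℝ)) * Real.Gamma ((q : ℝ) - α) *
      Real.cos (((q : ℝ) - α) * Real.pi / 2) : ℝ) : ℂ)
      = ((θ ^ (α - (q:ℝ)) : ℝ) : ℂ) *
        ((2 * Real.Gamma s * Real.cos (s * Real.pi / 2) : ℝ) : ℂ) := by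
    rw [← Complex.ofReal_mul]
    congr 1
    rw [hsdef]
    ring
  rw [hsplit, mul_div_mul_left _ _ hpow_ne]
end

section
/- Let α ≥ 3 be an odd integer. Then for every x ∈ ℝ, ∫_{-∞}^{∞} e^{−iθx − θ²/2} |θ|^α dθ = 2√2 (−1)^{(α−1)/2} (d^α/dx^α) D(x/√2), where the right-hand side is the α-th derivative with respect to x of the function x ↦ D(x/√2) and D(z) = e^{−z²} ∫_0^z e^{t²} dt is Dawson's integral. -/
open MeasureTheory Filter

open Set

/-- Dawson's integral `D(z) = e^{-z²} ∫_0^z e^{t²} dt`. -/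
noncomputable def dawson (z : ℝ) : ℝ := Real.exp (-z ^ 2) * ∫ t in (0 : ℝ)..z, Real.exp (t ^ 2)

noncomputable def Kr (k : ℕ) (x t : ℝ) : ℂ :=
  ((t ^ k * Real.exp (-t ^ 2 / 2) : ℝ) : ℂ) * Complex.exp (Complex.I * x * t)

noncomputable def Ek (k : ℕ) (x : ℝ) : ℂ := ∫ t in Set.Ioi (0:ℝ), Kr k x t

lemma Kr_norm (k : ℕ) (x t : ℝ) : ‖Kr k x t‖ = |t| ^ k * Real.exp (-t ^ 2 / 2) := by
  unfold Kr
  rw [norm_mul, Complex.norm_exp, Complex.norm_real, Real.norm_eq_abs]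
  have : (Complex.I * x * t).re = 0 := by simp
  rw [this, Real.exp_zero, mul_one, abs_mul, abs_pow, abs_of_pos (Real.exp_pos _)]

lemma Kr_cont (k : ℕ) (x : ℝ) : Continuous (Kr k x) := by
  unfold Kr; fun_prop

lemma bound_int (k : ℕ) : IntegrableOn (fun t : ℝ => t ^ k * Real.exp (-t ^ 2 / 2)) (Set.Ioi 0) := by
  have h := integrableOn_rpow_mul_exp_neg_mul_sq (b := (1:ℝ)/2) (by norm_num)
    (s := (k:ℝ)) (lt_of_lt_of_le neg_one_lt_zero (Nat.cast_nonneg k))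
  have e : ∀ t : ℝ, t ^ (k:ℝ) * Real.exp (-(1/2) * t ^ 2) = t ^ k * Real.exp (-t ^ 2 / 2) := by
    intro t; rw [Real.rpow_natCast]; ring_nf
  simpa only [e] using h

lemma bound_int_all (k : ℕ) : Integrable (fun t : ℝ => |t| ^ k * Real.exp (-t ^ 2 / 2)) := by
  have h := integrable_rpow_mul_exp_neg_mul_sq (b := (1:ℝ)/2) (by norm_num)
    (s := (k:ℝ)) (lt_of_lt_of_le neg_one_lt_zero (Nat.cast_nonneg k))
  have e : ∀ t : ℝ, t ^ (k:ℝ) * Real.exp (-(1/2) * t ^ 2) = t ^ k * Real.exp (-t ^ 2 / 2) := by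
    intro t; rw [Real.rpow_natCast]; ring_nf
  simp only [e] at h
  refine h.abs.congr (Filter.Eventually.of_forall fun t => ?_)
  show |t ^ k * Real.exp (-t ^ 2 / 2)| = _
  rw [abs_mul, abs_pow, abs_of_pos (Real.exp_pos _)]

lemma Kr_int (k : ℕ) (x : ℝ) : IntegrableOn (Kr k x) (Set.Ioi 0) := by
  refine Integrable.mono' (bound_int k) ((Kr_cont k x).aestronglyMeasurable) ?_
  filter_upwards [ae_restrict_mem measurableSet_Ioi] with t ht
  rw [Kr_norm, abs_of_pos ht]

lemma Kr_hasDerivAt (k : ℕ) (t x : ℝ) :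
    HasDerivAt (fun y : ℝ => Kr k y t) (Complex.I * Kr (k+1) x t) x := by
  have h1 : HasDerivAt (fun y : ℝ => Complex.I * y * t) (Complex.I * t) x := by
    simpa using ((Complex.ofRealCLM.hasDerivAt (x := x)).const_mul Complex.I).mul_const (t:ℂ)
  have h2 := h1.cexp
  have h3 := h2.const_mul ((t ^ k * Real.exp (-t ^ 2 / 2) : ℝ) : ℂ)
  refine h3.congr_deriv ?_
  unfold Kr
  push_cast
  ring

lemma Ek_hasDerivAt (k : ℕ) (x : ℝ) :
    HasDerivAt (Ek k) (Complex.I * Ek (k+1) x) x := by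
  have key := hasDerivAt_integral_of_dominated_loc_of_deriv_le (μ := volume.restrict (Set.Ioi 0))
    (F := fun y t => Kr k y t) (F' := fun y t => Complex.I * Kr (k+1) y t)
    (x₀ := x) (s := Metric.ball x 1) (bound := fun t => t ^ (k+1) * Real.exp (-t ^ 2 / 2))
    (Metric.ball_mem_nhds x one_pos)
    (Filter.Eventually.of_forall fun y => (Kr_cont k y).aestronglyMeasurable)
    (Kr_int k x)
    ((continuous_const.mul (Kr_cont (k+1) x)).aestronglyMeasurable)
    ?_ (bound_int (k+1)) ?_
  · have := key.2
    have e : ∫ t in Set.Ioi (0:ℝ), Complex.I * Kr (k+1) x t = Complex.I * Ek (k+1) x := by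
      rw [MeasureTheory.integral_const_mul]; rfl
    rw [e] at this
    exact this
  · filter_upwards [ae_restrict_mem measurableSet_Ioi] with t ht
    intro y _
    rw [norm_mul, Complex.norm_I, one_mul, Kr_norm, abs_of_pos ht]
  · filter_upwards with t
    intro y _
    exact Kr_hasDerivAt k t y

lemma Ek_one_eq (x : ℝ) : Ek 1 x = 1 + Complex.I * x * Ek 0 x := by
  set F : ℝ → ℂ := fun t => -((Real.exp (-t ^ 2 / 2) : ℝ) : ℂ) * Complex.exp (Complex.I * x * t)
    with hF
  have hFd : ∀ t : ℝ, HasDerivAt F (Kr 1 x t - Complex.I * x * Kr 0 x t) t := by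
    intro t
    have h1 : HasDerivAt (fun t : ℝ => Real.exp (-t ^ 2 / 2)) (-t * Real.exp (-t ^ 2 / 2)) t := by
      have hin : HasDerivAt (fun t : ℝ => -t ^ 2 / 2) (-t) t := by
        have := ((hasDerivAt_pow 2 t).neg).div_const (2:ℝ)
        refine this.congr_deriv ?_
        ring
      simpa [mul_comm] using hin.exp
    have h1c : HasDerivAt (fun t : ℝ => -((Real.exp (-t ^ 2 / 2) : ℝ) : ℂ))
        (-((-t * Real.exp (-t ^ 2 / 2) : ℝ) : ℂ)) t := by
      have := (Complex.ofRealCLM.hasFDerivAt.comp_hasDerivAt t h1)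
      exact this.neg
    have h2 : HasDerivAt (fun t : ℝ => Complex.exp (Complex.I * x * t))
        (Complex.I * x * Complex.exp (Complex.I * x * t)) t := by
      have hin : HasDerivAt (fun t : ℝ => Complex.I * x * t) (Complex.I * x) t := by
        simpa using (Complex.ofRealCLM.hasDerivAt (x := t)).const_mul (Complex.I * x)
      simpa [mul_comm] using hin.cexp
    have := h1c.mul h2
    refine this.congr_deriv ?_
    unfold Kr
    push_cast
    ring
  have hlim : Tendsto F atTop (nhds 0) := by
    rw [tendsto_zero_iff_norm_tendsto_zero]
    have : ∀ t : ℝ, ‖F t‖ = Real.exp (-t ^ 2 / 2) := by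
      intro t
      rw [hF]
      simp only [norm_mul, norm_neg, Complex.norm_real, Complex.norm_exp, Real.norm_eq_abs]
      have : (Complex.I * x * t).re = 0 := by simp
      rw [this, Real.exp_zero, mul_one, abs_of_pos (Real.exp_pos _)]
    simp only [this]
    have h2 : Tendsto (fun t : ℝ => -t ^ 2 / 2) atTop atBot := by
      apply Filter.Tendsto.atBot_div_const two_pos
      exact tendsto_neg_atTop_atBot.comp (tendsto_pow_atTop two_ne_zero)
    exact Real.tendsto_exp_atBot.comp h2
  have hint : IntegrableOn (fun t : ℝ => Kr 1 x t - Complex.I * x * Kr 0 x t) (Set.Ioi 0) :=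
    (Kr_int 1 x).sub (((Kr_int 0 x)).const_mul _)
  have := integral_Ioi_of_hasDerivAt_of_tendsto' (fun t _ => hFd t) hint hlim
  have hF0 : F 0 = -1 := by simp [hF]
  rw [hF0] at this
  have hsplit : ∫ t in Set.Ioi (0:ℝ), (Kr 1 x t - Complex.I * x * Kr 0 x t)
      = Ek 1 x - Complex.I * x * Ek 0 x := by
    rw [MeasureTheory.integral_sub (Kr_int 1 x) ((Kr_int 0 x).const_mul _),
      MeasureTheory.integral_const_mul]
    rfl
  rw [hsplit] at this
  have : Ek 1 x - Complex.I * x * Ek 0 x = 1 := by rw [this]; ring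
  linear_combination this

lemma iter_Ek (c : ℝ) (n : ℕ) :
    iteratedDeriv n (fun y : ℝ => c * (Ek 0 y).im) =
      fun x : ℝ => c * ((Complex.I ^ n * Ek n x).im) := by
  induction n with
  | zero => simp [iteratedDeriv_zero]
  | succ n ih =>
    rw [iteratedDeriv_succ, ih]
    funext x
    have hD : HasDerivAt (fun y : ℝ => Complex.I ^ n * Ek n y)
        (Complex.I ^ n * (Complex.I * Ek (n+1) x)) x := (Ek_hasDerivAt n x).const_mul _
    have him : HasDerivAt (fun y : ℝ => (Complex.I ^ n * Ek n y).im)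
        ((Complex.I ^ n * (Complex.I * Ek (n+1) x)).im) x :=
      Complex.imCLM.hasFDerivAt.comp_hasDerivAt x hD
    have hc := him.const_mul c
    rw [hc.deriv]
    congr 2
    ring

lemma g_hasDerivAt (x : ℝ) :
    HasDerivAt (fun y : ℝ => (Ek 0 y).im) (1 - x * (Ek 0 x).im) x := by
  have h := Complex.imCLM.hasFDerivAt.comp_hasDerivAt x (Ek_hasDerivAt 0 x)
  have e : (Complex.I * Ek 1 x).im = 1 - x * (Ek 0 x).im := by
    rw [Ek_one_eq x]
    simp [Complex.add_im, Complex.mul_im, Complex.mul_re]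
    ring
  have h' : HasDerivAt (fun y : ℝ => (Ek 0 y).im) ((Complex.I * Ek 1 x).im) x := by
    exact h
  rwa [e] at h'

lemma g_eq_int (x : ℝ) :
    Real.exp (x ^ 2 / 2) * (Ek 0 x).im = ∫ s in (0:ℝ)..x, Real.exp (s ^ 2 / 2) := by
  set φ : ℝ → ℝ := fun x => Real.exp (x ^ 2 / 2) * (Ek 0 x).im
    - ∫ s in (0:ℝ)..x, Real.exp (s ^ 2 / 2) with hφ
  have hd : ∀ y : ℝ, HasDerivAt φ 0 y := by
    intro y
    have h1 : HasDerivAt (fun y : ℝ => Real.exp (y ^ 2 / 2)) (y * Real.exp (y ^ 2 / 2)) y := by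
      have hin : HasDerivAt (fun y : ℝ => y ^ 2 / 2) y y := by
        have := (hasDerivAt_pow 2 y).div_const (2:ℝ)
        refine this.congr_deriv ?_
        ring
      simpa [mul_comm] using hin.exp
    have h2 := h1.mul (g_hasDerivAt y)
    have h3 : HasDerivAt (fun y : ℝ => ∫ s in (0:ℝ)..y, Real.exp (s ^ 2 / 2))
        (Real.exp (y ^ 2 / 2)) y :=
      (Real.continuous_exp.comp (by continuity)).integral_hasStrictDerivAt 0 y |>.hasDerivAt
    have := h2.sub h3
    refine this.congr_deriv ?_
    ring
  have hconst : φ x = φ 0 :=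
    is_const_of_deriv_eq_zero (fun y => (hd y).differentiableAt)
      (fun y => (hd y).deriv) x 0
  have hφ0 : φ 0 = 0 := by
    have hE : (Ek 0 0).im = 0 := by
      have h0 : (∫ t in Set.Ioi (0:ℝ), Kr 0 0 t).im
          = ∫ t in Set.Ioi (0:ℝ), (Kr 0 0 t).im := by
        simpa using (Complex.imCLM.integral_comp_comm (Kr_int 0 0)).symm
      rw [show Ek 0 0 = ∫ t in Set.Ioi (0:ℝ), Kr 0 0 t from rfl, h0]
      have e2 : ∀ t : ℝ, (Complex.exp (-(t:ℂ) ^ 2 / 2)).im = 0 := by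
        intro t
        rw [show -(t:ℂ) ^ 2 / 2 = ((-t ^ 2 / 2 : ℝ) : ℂ) by push_cast; ring]
        exact Complex.exp_ofReal_im _
      simp [Kr, e2]
    simp [hφ, hE]
  have := hconst.trans hφ0
  rw [hφ] at this
  linarith [this]

lemma g_eq_dawson (x : ℝ) : (Ek 0 x).im = Real.sqrt 2 * dawson (x / Real.sqrt 2) := by
  have h2 : (0:ℝ) < Real.sqrt 2 := Real.sqrt_pos.mpr two_pos
  have hsq : Real.sqrt 2 ^ 2 = 2 := Real.sq_sqrt (by norm_num)
  have hsub : ∫ s in (0:ℝ)..x, Real.exp (s ^ 2 / 2)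
      = Real.sqrt 2 * ∫ u in (0:ℝ)..(x / Real.sqrt 2), Real.exp (u ^ 2) := by
    have h := intervalIntegral.integral_comp_div (a := (0:ℝ)) (b := x)
      (c := Real.sqrt 2) (f := fun u => Real.exp (u ^ 2)) (ne_of_gt h2)
    have e : ∀ s : ℝ, Real.exp ((s / Real.sqrt 2) ^ 2) = Real.exp (s ^ 2 / 2) := by
      intro s
      congr 1
      rw [div_pow, hsq]
    simp only [e, zero_div, smul_eq_mul] at h
    rw [h]
  have hexp : Real.exp (-(x / Real.sqrt 2) ^ 2) = Real.exp (-x ^ 2 / 2) := by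
    congr 1
    rw [div_pow, hsq]
    ring
  have key := g_eq_int x
  rw [hsub] at key
  unfold dawson
  rw [hexp]
  have hmul : Real.exp (-x ^ 2 / 2) * Real.exp (x ^ 2 / 2) = 1 := by
    rw [← Real.exp_add, show -x ^ 2 / 2 + x ^ 2 / 2 = 0 by ring, Real.exp_zero]
  calc (Ek 0 x).im = Real.exp (-x ^ 2 / 2) * (Real.exp (x ^ 2 / 2) * (Ek 0 x).im) := by
        rw [← mul_assoc, hmul, one_mul]
    _ = Real.exp (-x ^ 2 / 2) * (Real.sqrt 2 * ∫ u in (0:ℝ)..(x / Real.sqrt 2), Real.exp (u ^ 2)) := by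
        rw [key]
    _ = _ := by ring

/-- for odd `α ≥ 3` and every `x ∈ ℝ`,
`∫ θ, e^{-iθx - θ²/2} |θ|^α dθ = 2√2 (-1)^((α-1)/2) (d^α/dx^α) D(x/√2)`. -/
theorem gaussian_abs_pow_fourier_odd (α : ℕ) (hα : 3 ≤ α) (hodd : Odd α) (x : ℝ) :
    ∫ θ : ℝ, Complex.exp (-(Complex.I * θ * x) - θ ^ 2 / 2) * ((|θ| ^ α : ℝ) : ℂ) =
      ((2 * Real.sqrt 2 * (-1 : ℝ) ^ ((α - 1) / 2) *
          iteratedDeriv α (fun y : ℝ => dawson (y / Real.sqrt 2)) x : ℝ) : ℂ) := by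
  obtain ⟨m, hm⟩ := hodd
  have hm2 : (α - 1) / 2 = m := by omega
  set f : ℝ → ℂ := fun θ => Complex.exp (-(Complex.I * θ * x) - θ ^ 2 / 2) * ((|θ| ^ α : ℝ) : ℂ)
    with hf
  -- integrability of f
  have hfnorm : ∀ θ : ℝ, ‖f θ‖ = |θ| ^ α * Real.exp (-θ ^ 2 / 2) := by
    intro θ
    rw [hf]
    simp only [norm_mul, Complex.norm_exp, Complex.norm_real, Real.norm_eq_abs]
    have hre : (-(Complex.I * θ * x) - (θ:ℂ) ^ 2 / 2).re = -θ ^ 2 / 2 := by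
      simp [Complex.sub_re, Complex.div_re, Complex.mul_re, pow_two]
      ring
    rw [hre, abs_of_nonneg (by positivity : (0:ℝ) ≤ |θ| ^ α)]
    ring
  have hfcont : Continuous f := by
    rw [hf]; fun_prop
  have hfint : Integrable f := by
    refine Integrable.mono' (bound_int_all α) hfcont.aestronglyMeasurable ?_
    filter_upwards with θ
    rw [hfnorm]
  -- pointwise identities on Ioi 0
  have hpt1 : ∀ t : ℝ, t ∈ Set.Ioi (0:ℝ) → f (-t) = Kr α x t := by
    intro t ht
    rw [hf]
    show Complex.exp (-(Complex.I * ↑(-t) * x) - (↑(-t):ℂ) ^ 2 / 2) * ((|(-t)| ^ α : ℝ) : ℂ) = _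
    rw [abs_neg, abs_of_pos ht]
    rw [show (-(Complex.I * ↑(-t) * x) - (↑(-t):ℂ) ^ 2 / 2)
        = Complex.I * x * t + ((-t ^ 2 / 2 : ℝ) : ℂ) by push_cast; ring]
    rw [Complex.exp_add, ← Complex.ofReal_exp]
    unfold Kr
    push_cast
    ring
  have hpt2 : ∀ t : ℝ, t ∈ Set.Ioi (0:ℝ) →
      f t = (starRingEnd ℂ) (Kr α x t) := by
    intro t ht
    rw [hf]
    show Complex.exp (-(Complex.I * t * x) - (t:ℂ) ^ 2 / 2) * ((|t| ^ α : ℝ) : ℂ) = _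
    rw [abs_of_pos ht]
    unfold Kr
    rw [map_mul, Complex.conj_ofReal, ← Complex.exp_conj]
    rw [show (starRingEnd ℂ) (Complex.I * x * t) = -(Complex.I * t * x) by
      simp [Complex.conj_I]; ring]
    rw [show (-(Complex.I * t * x) - (t:ℂ) ^ 2 / 2)
        = -(Complex.I * t * x) + ((-t ^ 2 / 2 : ℝ) : ℂ) by push_cast; ring]
    rw [Complex.exp_add, ← Complex.ofReal_exp]
    push_cast
    ring
  -- split the integral
  have hsplit : ∫ θ : ℝ, f θ = (∫ θ in Set.Iic (0:ℝ), f θ) + ∫ θ in Set.Ioi (0:ℝ), f θ := by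
    rw [intervalIntegral.integral_Iic_add_Ioi hfint.integrableOn hfint.integrableOn]
  have hIic : ∫ θ in Set.Iic (0:ℝ), f θ = Ek α x := by
    have h := integral_comp_neg_Iic (0:ℝ) (fun t => f (-t))
    simp only [neg_neg, neg_zero] at h
    rw [h]
    exact setIntegral_congr_fun measurableSet_Ioi hpt1
  have hIoi : ∫ θ in Set.Ioi (0:ℝ), f θ = (starRingEnd ℂ) (Ek α x) := by
    rw [setIntegral_congr_fun measurableSet_Ioi hpt2]
    exact integral_conj
  have hLHS : ∫ θ : ℝ, f θ = ((2 * (Ek α x).re : ℝ) : ℂ) := by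
    rw [hsplit, hIic, hIoi, Complex.add_conj]
  rw [hLHS]
  -- right-hand side
  have h2 : (0:ℝ) < Real.sqrt 2 := Real.sqrt_pos.mpr two_pos
  have hdf : (fun y : ℝ => dawson (y / Real.sqrt 2))
      = fun y : ℝ => (Real.sqrt 2)⁻¹ * (Ek 0 y).im := by
    funext y
    rw [g_eq_dawson y, ← mul_assoc, inv_mul_cancel₀ (ne_of_gt h2), one_mul]
  rw [hdf, iter_Ek]
  -- compute I ^ α
  have hIpow : Complex.I ^ α = (((-1 : ℝ) ^ m : ℝ) : ℂ) * Complex.I := by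
    rw [hm, pow_succ, pow_mul, Complex.I_sq]
    push_cast
    ring
  have hgen : ∀ (r : ℝ) (z : ℂ), ((r:ℂ) * Complex.I * z).im = r * z.re := by
    intro r z
    rw [mul_assoc]
    simp [Complex.I_mul_im]
  have him : (Complex.I ^ α * Ek α x).im = (-1 : ℝ) ^ m * (Ek α x).re := by
    rw [hIpow]
    exact hgen _ _
  simp only [him, hm2]
  rw [Complex.ofReal_inj]
  have h11 : (-1 : ℝ) ^ m * (-1 : ℝ) ^ m = 1 := by
    rw [← pow_add]
    exact Even.neg_one_pow ⟨m, rfl⟩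
  have h22 : Real.sqrt 2 * (Real.sqrt 2)⁻¹ = 1 := mul_inv_cancel₀ (ne_of_gt h2)
  calc 2 * (Ek α x).re
      = (2 * (Real.sqrt 2 * (Real.sqrt 2)⁻¹) * ((-1:ℝ) ^ m * (-1:ℝ) ^ m)) * (Ek α x).re := by
        rw [h11, h22]; ring
    _ = 2 * Real.sqrt 2 * (-1:ℝ) ^ m * ((Real.sqrt 2)⁻¹ * ((-1:ℝ) ^ m * (Ek α x).re)) := by
        ring
end
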